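/- arXiv:1701.05989 — 7 statements merged into one kernel-verified Lean document; each statement's English description precedes it below -/
import Mathlib

section
/- Let C be a linear subspace of 𝔽₂ⁿ of dimension k whose nonzero vectors all have Hamming weight at least d, and suppose C has locality r, witnessed by a finite set H ⊆ C⊥ of vectors each of Hamming weight at most r+1 whose supports cover {1,…,n}. Let V = {v ∈ 𝔽₂ⁿ : v·h = 0 for all h ∈ H}. Then 2^k · |{v ∈ V : wt(v) ≤ ⌊(d−1)/2⌋}| ≤ 2^{dim V}; equivalently, k ≤ dim V − log₂|{v ∈ V : wt(v) ≤ ⌊(d−1)/2⌋}|. -/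
/-- Proposition 1 of the paper: sphere-packing bound in an ℒ-space.
`C` is an `[n,k,d]` binary LRC with locality `r` witnessed by a set `H ⊆ C⊥` of
local parity checks of weight at most `r+1` whose supports cover all coordinates,
and `V = Span(H)⊥` is the corresponding ℒ-space.  Then
`2^k · |{v ∈ V : wt v ≤ ⌊(d−1)/2⌋}| ≤ 2^(dim V)`. -/
theorem stmt_1 (n k d r : ℕ)
    (C : Submodule (ZMod 2) (Fin n → ZMod 2))
    (hk : Module.finrank (ZMod 2) C = k)
    (hdist : ∀ c ∈ C, c ≠ 0 → d ≤ hammingNorm c)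
    (H : Finset (Fin n → ZMod 2))
    (hdual : ∀ h ∈ H, ∀ c ∈ C, ∑ i, h i * c i = 0)
    (hwt : ∀ h ∈ H, hammingNorm h ≤ r + 1)
    (hcover : ∀ i : Fin n, ∃ h ∈ H, h i ≠ 0)
    (V : Submodule (ZMod 2) (Fin n → ZMod 2))
    (hV : (V : Set (Fin n → ZMod 2)) = {v | ∀ h ∈ H, ∑ i, v i * h i = 0}) :
    2 ^ k *
      Set.ncard {v ∈ (V : Set (Fin n → ZMod 2)) | hammingNorm v ≤ (d - 1) / 2} ≤
    2 ^ Module.finrank (ZMod 2) V := by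
  classical
  set t := (d - 1) / 2 with ht
  set B : Set (Fin n → ZMod 2) := {v ∈ (V : Set (Fin n → ZMod 2)) | hammingNorm v ≤ t} with hB
  -- C ⊆ V
  have hCV : (C : Set (Fin n → ZMod 2)) ⊆ V := by
    intro c hc
    rw [hV]
    intro h hh
    rw [← hdual h hh c hc]
    exact Finset.sum_congr rfl fun i _ => mul_comm _ _
  have hBfin : B.Finite := Set.toFinite _
  -- injective map from C × B into V
  have key : Fintype.card (C × B) ≤ Fintype.card V := by
    apply Fintype.card_le_of_injective
      (fun p => (⟨(p.1 : Fin n → ZMod 2) + p.2, V.add_mem (hCV p.1.2) p.2.2.1⟩ : V))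
    rintro ⟨⟨c₁, hc₁⟩, ⟨v₁, hv₁⟩⟩ ⟨⟨c₂, hc₂⟩, ⟨v₂, hv₂⟩⟩ heq
    simp only [Subtype.mk_eq_mk] at heq
    have hsub : c₁ - c₂ = v₂ - v₁ := by
      have := congrArg (· - c₂ - v₁) heq
      simpa [sub_sub, add_comm, add_sub_add_left_eq_sub] using by linear_combination (norm := abel) heq
    have hwtle : hammingNorm (c₁ - c₂) ≤ 2 * t := by
      rw [hsub, sub_eq_neg_add, ← hammingDist_eq_hammingNorm, hammingDist_comm]
      calc hammingDist v₂ v₁ ≤ hammingDist v₂ 0 + hammingDist 0 v₁ := hammingDist_triangle _ _ _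
        _ ≤ t + t := by
            rw [hammingDist_zero_right, hammingDist_comm, hammingDist_zero_right]
            exact Nat.add_le_add hv₂.2 hv₁.2
        _ = 2 * t := (two_mul t).symm
    have hcc : c₁ = c₂ := by
      by_contra hne
      have hmem : c₁ - c₂ ∈ C := C.sub_mem hc₁ hc₂
      have hne' : c₁ - c₂ ≠ 0 := sub_ne_zero.mpr hne
      have hd := hdist _ hmem hne'
      have h2t : 2 * t ≤ d - 1 := by
        rcases Nat.eq_zero_or_pos d with hd0 | hd0
        · subst hd0; simp [ht]
        · omega
      have hpos : 0 < hammingNorm (c₁ - c₂) := hammingNorm_pos_iff.mpr hne'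
      omega
    subst hcc
    have : c₁ + v₁ = c₁ + v₂ := heq
    have hv : v₁ = v₂ := by exact add_left_cancel this
    simp [hv]
  -- cardinalities
  have hC : Fintype.card C = 2 ^ k := by
    rw [Module.card_eq_pow_finrank (K := ZMod 2) (V := C), hk]; simp [ZMod.card]
  have hVcard : Fintype.card V = 2 ^ Module.finrank (ZMod 2) V := by
    rw [Module.card_eq_pow_finrank (K := ZMod 2) (V := V)]; simp [ZMod.card]
  have hBcard : Fintype.card B = B.ncard := by
    rw [Set.ncard_eq_toFinset_card']; simp [Set.toFinset_card]
  rw [Fintype.card_prod, hC, hVcard, hBcard] at key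
  exact key
end

section
/- Let h₁,…,h_l ∈ 𝔽₂ⁿ be vectors with pairwise disjoint supports whose supports together cover {1,…,n}, and suppose wt(h_j) = r_j + 1 for each j (with integers r_j ≥ 0). Let V = {v ∈ 𝔽₂ⁿ : v·h_j = 0 for all j ∈ {1,…,l}}. Then dim V = n − l, every vector of V has even Hamming weight, and for every integer s ≥ 0, |{v ∈ V : wt(v) ≤ s}| = Σ over tuples of nonnegative integers (i₁,…,i_l) with i₁+⋯+i_l ≤ ⌊s/2⌋ of Π_{j=1}^{l} C(r_j+1, 2i_j), where C(a,b) denotes the binomial coefficient. -/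
open Finset

lemma aux_count_partition {n l : ℕ} (π : Fin n → Fin l) (m : Fin l → ℕ) :
    (Finset.univ.filter fun S : Finset (Fin n) =>
        ∀ j, (S.filter fun i => π i = j).card = m j).card =
      ∏ j, ((Finset.univ.filter fun i : Fin n => π i = j).card).choose (m j) := by
  classical
  have : ∀ j : Fin l, ((Finset.univ.filter fun i : Fin n => π i = j).card).choose (m j)
      = (Finset.powersetCard (m j) (Finset.univ.filter fun i : Fin n => π i = j)).card := by
    intro j; rw [Finset.card_powersetCard]
  simp_rw [this]
  rw [← Fintype.card_piFinset]
  apply Finset.card_bij' (fun S _ => fun j => S.filter fun i => π i = j)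
    (fun x _ => Finset.univ.filter fun i => i ∈ x (π i))
  · intro S hS
    simp only [Finset.mem_filter, Finset.mem_univ, true_and] at hS
    rw [Fintype.mem_piFinset]
    intro j
    rw [Finset.mem_powersetCard]
    refine ⟨?_, hS j⟩
    intro i hi
    simp only [Finset.mem_filter] at hi ⊢
    exact ⟨Finset.mem_univ i, hi.2⟩
  · intro x hx
    rw [Fintype.mem_piFinset] at hx
    simp only [Finset.mem_filter, Finset.mem_univ, true_and]
    intro j
    have hsub : ∀ j, ∀ i ∈ x j, π i = j := by
      intro j i hi
      have := (Finset.mem_powersetCard.mp (hx j)).1 hi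
      exact (Finset.mem_filter.mp this).2
    have : ((Finset.univ.filter fun i => i ∈ x (π i)).filter fun i => π i = j) = x j := by
      ext i
      simp only [Finset.mem_filter, Finset.mem_univ, true_and]
      constructor
      · rintro ⟨hi, hj⟩; rwa [hj] at hi
      · intro hi; have := hsub j i hi; exact ⟨by rwa [this], this⟩
    rw [this]
    exact (Finset.mem_powersetCard.mp (hx j)).2
  · intro S hS
    ext i
    simp only [Finset.mem_filter, Finset.mem_univ, true_and]
    constructor
    · intro hmem
      exact hmem.1
    · intro hmem
      exact ⟨hmem, trivial⟩
  · intro x hx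
    rw [Fintype.mem_piFinset] at hx
    have hsub : ∀ j, ∀ i ∈ x j, π i = j := by
      intro j i hi
      have := (Finset.mem_powersetCard.mp (hx j)).1 hi
      exact (Finset.mem_filter.mp this).2
    funext j
    ext i
    simp only [Finset.mem_filter, Finset.mem_univ, true_and]
    constructor
    · rintro ⟨hi, hj⟩; rwa [hj] at hi
    · intro hi; have := hsub j i hi; exact ⟨by rwa [this], this⟩

lemma aux_vec_to_set {n : ℕ} (P : Finset (Fin n) → Prop) [DecidablePred P] :
    (Finset.univ.filter fun v : Fin n → ZMod 2 =>
        P (Finset.univ.filter fun i => v i ≠ 0)).card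
      = (Finset.univ.filter P).card := by
  classical
  have hval : ∀ a : ZMod 2, a = 0 ∨ a = 1 := by decide
  refine Finset.card_bij' (fun v _ => Finset.univ.filter fun i => v i ≠ 0)
    (fun S _ => fun i => if i ∈ S then (1 : ZMod 2) else 0) ?_ ?_ ?_ ?_
  · intro v hv
    simp only [Finset.mem_filter, Finset.mem_univ, true_and] at hv ⊢
    exact hv
  · intro S hS
    simp only [Finset.mem_filter, Finset.mem_univ, true_and] at hS ⊢
    have : (Finset.univ.filter fun i => (if i ∈ S then (1 : ZMod 2) else 0) ≠ 0) = S := by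
      ext i
      simp only [Finset.mem_filter, Finset.mem_univ, true_and]
      by_cases hi : i ∈ S <;> simp [hi]
    rwa [this]
  · intro v hv
    funext i
    by_cases hi : v i = 0 <;> simp only [Finset.mem_filter, Finset.mem_univ, true_and]
    · simp [hi]
    · rcases hval (v i) with h0 | h1
      · exact absurd h0 hi
      · simp [hi, h1]
  · intro S hS
    ext i
    simp only [Finset.mem_filter, Finset.mem_univ, true_and]
    by_cases hi : i ∈ S <;> simp [hi]

/-- Weight distribution of the dual of a direct sum of single parity checks:
if `h₁,…,h_l` have pairwise disjoint supports covering `{1,…,n}` with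
`wt(h_j) = r_j + 1`, and `V = {v : v·h_j = 0 ∀j}`, then `dim V = n − l`,
every vector of `V` has even weight, and
`|{v ∈ V : wt v ≤ s}| = Σ_{i₁+⋯+i_l ≤ ⌊s/2⌋} Π_j C(r_j+1, 2i_j)`. -/
theorem stmt_2 (n l : ℕ) (r : Fin l → ℕ) (h : Fin l → (Fin n → ZMod 2))
    (hwt : ∀ j, hammingNorm (h j) = r j + 1)
    (hdisj : ∀ j j', j ≠ j' → ∀ i, h j i = 0 ∨ h j' i = 0)
    (hcover : ∀ i : Fin n, ∃ j, h j i ≠ 0)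
    (V : Submodule (ZMod 2) (Fin n → ZMod 2))
    (hV : (V : Set (Fin n → ZMod 2)) = {v | ∀ j, ∑ i, v i * h j i = 0}) :
    Module.finrank (ZMod 2) V = n - l ∧
    (∀ v ∈ V, Even (hammingNorm v)) ∧
    ∀ s : ℕ,
      Set.ncard {v ∈ (V : Set (Fin n → ZMod 2)) | hammingNorm v ≤ s} =
        ∑ x ∈ Finset.filter (fun x => ∑ j, x j ≤ s / 2)
            (Fintype.piFinset fun _ : Fin l => Finset.range (s / 2 + 1)),
          ∏ j, Nat.choose (r j + 1) (2 * x j) := by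
  classical
  have hval : ∀ a : ZMod 2, a = 0 ∨ a = 1 := by decide
  choose π hπ using hcover
  -- uniqueness
  have hπuniq : ∀ j i, h j i ≠ 0 → π i = j := by
    intro j i hi
    by_contra hne
    rcases hdisj (π i) j hne i with h0 | h0
    · exact hπ i h0
    · exact hi h0
  have hh : ∀ j i, h j i = if π i = j then 1 else 0 := by
    intro j i
    by_cases hij : π i = j
    · rcases hval (h j i) with h0 | h1
      · exfalso; exact hπ i (by rw [hij]; exact h0)
      · simp [hij, h1]
    · simp only [hij, if_false]
      by_contra h0
      exact hij (hπuniq j i h0)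
  -- membership in V
  have hVmem : ∀ v, v ∈ V ↔ ∀ j, ∑ i, v i * h j i = 0 := by
    intro v
    have : v ∈ V ↔ v ∈ (V : Set (Fin n → ZMod 2)) := Iff.rfl
    rw [this, hV]; rfl
  -- c v j := number of nonzero coordinates of v in fiber j
  set c : (Fin n → ZMod 2) → Fin l → ℕ :=
    fun v j => ((Finset.univ.filter fun i : Fin n => π i = j).filter fun i => v i ≠ 0).card
    with hc
  have hsum : ∀ v j, ∑ i, v i * h j i = (c v j : ZMod 2) := by
    intro v j
    have h1 : ∑ i, v i * h j i
        = ∑ i ∈ Finset.univ.filter (fun i : Fin n => π i = j), v i := by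
      rw [Finset.sum_filter]
      apply Finset.sum_congr rfl
      intro i _
      rw [hh j i]
      by_cases hij : π i = j <;> simp [hij]
    rw [h1, hc]
    rw [Finset.natCast_card_filter]
    apply Finset.sum_congr rfl
    intro i _
    rcases hval (v i) with h0 | h0 <;> simp [h0]
  have hVmem' : ∀ v, v ∈ V ↔ ∀ j, Even (c v j) := by
    intro v
    rw [hVmem]
    apply forall_congr'
    intro j
    rw [hsum, ZMod.natCast_eq_zero_iff, Nat.even_iff, Nat.dvd_iff_mod_eq_zero]
  -- weight
  have hwt' : ∀ v : Fin n → ZMod 2, hammingNorm v = ∑ j, c v j := by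
    intro v
    have : hammingNorm v = (Finset.univ.filter fun i => v i ≠ 0).card := rfl
    rw [this]
    rw [Finset.card_eq_sum_card_fiberwise (f := π) (t := Finset.univ)
      (fun i _ => Finset.mem_univ (π i))]
    apply Finset.sum_congr rfl
    intro j _
    congr 1
    rw [Finset.filter_comm]
  -- fiber cardinality
  have hfib : ∀ j, (Finset.univ.filter fun i : Fin n => π i = j).card = r j + 1 := by
    intro j
    rw [← hwt j]
    have : hammingNorm (h j) = (Finset.univ.filter fun i => h j i ≠ 0).card := rfl
    rw [this]
    congr 1
    ext i
    simp only [Finset.mem_filter, Finset.mem_univ, true_and]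
    constructor
    · intro hij
      rw [hh j i, if_pos hij]; exact one_ne_zero
    · exact hπuniq j i
  refine ⟨?_, ?_, ?_⟩
  · -- finrank
    set Φ : (Fin n → ZMod 2) →ₗ[ZMod 2] (Fin l → ZMod 2) :=
      { toFun := fun v j => ∑ i, v i * h j i
        map_add' := by
          intro v w; funext j
          simp [add_mul, Finset.sum_add_distrib]
        map_smul' := by
          intro a v; funext j
          simp [Finset.mul_sum, mul_assoc] } with hΦ
    have hker : V = LinearMap.ker Φ := by
      ext v
      rw [hVmem v, LinearMap.mem_ker]
      constructor
      · intro hv; funext j; exact hv j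
      · intro hv j; exact congrFun hv j
    have hpickex : ∀ j : Fin l, ∃ i, π i = j := by
      intro j
      have := hfib j
      have hpos : 0 < (Finset.univ.filter fun i : Fin n => π i = j).card := by omega
      obtain ⟨i, hi⟩ := Finset.card_pos.mp hpos
      exact ⟨i, (Finset.mem_filter.mp hi).2⟩
    choose pick hpick using hpickex
    have hsurj : Function.Surjective Φ := by
      intro w
      refine ⟨fun i => if i = pick (π i) then w (π i) else 0, ?_⟩
      funext j
      show ∑ i, (if i = pick (π i) then w (π i) else 0) * h j i = w j
      have h1 : ∑ i, (if i = pick (π i) then w (π i) else 0) * h j i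
          = ∑ i ∈ Finset.univ.filter (fun i : Fin n => π i = j),
              (if i = pick (π i) then w (π i) else 0) := by
        rw [Finset.sum_filter]
        apply Finset.sum_congr rfl
        intro i _
        rw [hh j i]
        by_cases hij : π i = j <;> simp [hij]
      rw [h1]
      rw [Finset.sum_congr rfl (g := fun i => if i = pick j then w j else 0) ?_]
      · rw [Finset.sum_ite_eq' (Finset.univ.filter fun i : Fin n => π i = j)
          (pick j) (fun _ => w j)]
        rw [if_pos]
        simp [hpick j]
      · intro i hi
        have hij : π i = j := (Finset.mem_filter.mp hi).2
        rw [hij]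
    have hrange : LinearMap.range Φ = ⊤ := LinearMap.range_eq_top.mpr hsurj
    have hrn := LinearMap.finrank_range_add_finrank_ker Φ
    rw [hrange] at hrn
    have h1 : Module.finrank (ZMod 2) (⊤ : Submodule (ZMod 2) (Fin l → ZMod 2)) = l := by
      rw [finrank_top]
      simp [Module.finrank_fintype_fun_eq_card]
    have h2 : Module.finrank (ZMod 2) (Fin n → ZMod 2) = n := by
      simp [Module.finrank_fintype_fun_eq_card]
    rw [h1, h2] at hrn
    rw [hker]
    omega
  · -- even weight
    intro v hv
    rw [hwt' v]
    rw [hVmem' v] at hv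
    exact Finset.even_sum _ fun j _ => hv j
  · -- counting
    intro s
    set A := Finset.filter (fun x => ∑ j, x j ≤ s / 2)
        (Fintype.piFinset fun _ : Fin l => Finset.range (s / 2 + 1)) with hA
    set T : Finset (Fin n → ZMod 2) :=
      Finset.univ.filter fun v => (∀ j, Even (c v j)) ∧ ∑ j, c v j ≤ s with hT
    have hsetT : {v ∈ (V : Set (Fin n → ZMod 2)) | hammingNorm v ≤ s} = ↑T := by
      ext v
      simp only [Set.mem_setOf_eq, Finset.coe_filter, Finset.mem_univ, true_and, hT,
        Finset.mem_coe, Finset.mem_filter]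
      rw [SetLike.mem_coe, hVmem' v, hwt' v]
    rw [hsetT, Set.ncard_coe_finset]
    -- fiberwise counting over g v = fun j => c v j / 2
    have hmap : ∀ v ∈ T, (fun j => c v j / 2) ∈ A := by
      intro v hv
      simp only [hT, Finset.mem_filter, Finset.mem_univ, true_and] at hv
      obtain ⟨heven, hle⟩ := hv
      have h2 : ∀ j, c v j = 2 * (c v j / 2) := by
        intro j
        have := (heven j).two_dvd
        omega
      have hsum2 : ∑ j, c v j = 2 * ∑ j, c v j / 2 := by
        rw [Finset.mul_sum]
        exact Finset.sum_congr rfl fun j _ => h2 j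
      have hle2 : ∑ j, c v j / 2 ≤ s / 2 := by omega
      simp only [hA, Finset.mem_filter, Fintype.mem_piFinset, Finset.mem_range]
      refine ⟨fun j => ?_, hle2⟩
      have : c v j / 2 ≤ ∑ j, c v j / 2 :=
        Finset.single_le_sum (f := fun j => c v j / 2) (fun j _ => Nat.zero_le _)
          (Finset.mem_univ j)
      omega
    rw [Finset.card_eq_sum_card_fiberwise hmap]
    apply Finset.sum_congr rfl
    intro x hx
    simp only [hA, Finset.mem_filter, Fintype.mem_piFinset, Finset.mem_range] at hx
    have hfibeq : (T.filter fun v => (fun j => c v j / 2) = x)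
        = Finset.univ.filter fun v => ∀ j, c v j = 2 * x j := by
      ext v
      simp only [hT, Finset.mem_filter, Finset.mem_univ, true_and]
      constructor
      · rintro ⟨⟨heven, _⟩, hgv⟩
        intro j
        have := (heven j).two_dvd
        have := congrFun hgv j
        omega
      · intro hcv
        have hsum2 : ∑ j, c v j = 2 * ∑ j, x j := by
          rw [Finset.mul_sum]
          exact Finset.sum_congr rfl fun j _ => hcv j
        refine ⟨⟨fun j => ⟨x j, by rw [hcv j]; ring⟩, ?_⟩, ?_⟩
        · have := hx.2
          omega
        · funext j
          have := hcv j
          omega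
    rw [hfibeq]
    -- now count vectors with prescribed fiber counts
    have hccomm : ∀ v j, c v j
        = ((Finset.univ.filter fun i => v i ≠ 0).filter fun i => π i = j).card := by
      intro v j
      rw [hc, Finset.filter_comm]
    have : (Finset.univ.filter fun v : Fin n → ZMod 2 => ∀ j, c v j = 2 * x j)
        = Finset.univ.filter fun v : Fin n → ZMod 2 =>
            (fun S : Finset (Fin n) => ∀ j, (S.filter fun i => π i = j).card = 2 * x j)
              (Finset.univ.filter fun i => v i ≠ 0) := by
      apply Finset.filter_congr
      intro v _
      simp only
      exact forall_congr' fun j => by rw [hccomm v j]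
    rw [this]
    refine (aux_vec_to_set
      (fun S : Finset (Fin n) => ∀ j, (S.filter fun i => π i = j).card = 2 * x j)).trans ?_
    refine (aux_count_partition π fun j => 2 * x j).trans ?_
    exact Finset.prod_congr rfl fun j _ => by rw [hfib j]
end

section
/- Let C be a k-dimensional linear subspace of 𝔽₂ⁿ whose nonzero vectors all have Hamming weight at least d, and suppose there exist vectors h₁,…,h_l ∈ C⊥, each of Hamming weight exactly r+1, with pairwise disjoint supports whose union is {1,…,n} (so n = l(r+1)). Then 2^k · ( Σ over tuples of nonnegative integers (i₁,…,i_l) with i₁+⋯+i_l ≤ ⌊(d−1)/4⌋ of Π_{j=1}^{l} C(r+1, 2i_j) ) ≤ 2^{rn/(r+1)}; equivalently, k ≤ rn/(r+1) − log₂( Σ_{0 ≤ i₁+⋯+i_l ≤ ⌊(d−1)/4⌋} Π_{j=1}^{l} C(r+1, 2i_j) ). -/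
/-- Corollary 1 of the paper: for a binary `[n,k,d]` LRC with disjoint local repair
groups of locality `r` (so `n = l(r+1)`),
`2^k · Σ_{i₁+⋯+i_l ≤ ⌊(d−1)/4⌋} Π_j C(r+1, 2i_j) ≤ 2^{rn/(r+1)}`. -/
theorem stmt_3 (n k d r l : ℕ)
    (C : Submodule (ZMod 2) (Fin n → ZMod 2))
    (hk : Module.finrank (ZMod 2) C = k)
    (hdist : ∀ c ∈ C, c ≠ 0 → d ≤ hammingNorm c)
    (h : Fin l → (Fin n → ZMod 2))
    (hdual : ∀ j, ∀ c ∈ C, ∑ i, h j i * c i = 0)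
    (hwt : ∀ j, hammingNorm (h j) = r + 1)
    (hdisj : ∀ j j', j ≠ j' → ∀ i, h j i = 0 ∨ h j' i = 0)
    (hcover : ∀ i : Fin n, ∃ j, h j i ≠ 0)
    (hn : n = l * (r + 1)) :
    2 ^ k *
      (∑ x ∈ Finset.filter (fun x => ∑ j, x j ≤ (d - 1) / 4)
          (Fintype.piFinset fun _ : Fin l => Finset.range ((d - 1) / 4 + 1)),
        ∏ j, Nat.choose (r + 1) (2 * x j)) ≤
    2 ^ (r * n / (r + 1)) := by
  classical
  have one_of_ne : ∀ a : ZMod 2, a ≠ 0 → a = 1 := by decide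
  set t := (d - 1) / 4 with ht
  -- the groups
  set G : Fin l → Finset (Fin n) := fun j => Finset.univ.filter (fun i => h j i ≠ 0) with hGdef
  have hG : ∀ j, (G j).card = r + 1 := fun j => hwt j
  have hGd : ∀ j j' i, j ≠ j' → i ∈ G j → i ∉ G j' := by
    intro j j' i hjj hij hij'
    simp only [hGdef, Finset.mem_filter] at hij hij'
    rcases hdisj j j' hjj i with h0 | h0
    · exact hij.2 h0
    · exact hij'.2 h0
  -- the parity-check linear map
  set φ : (Fin n → ZMod 2) →ₗ[ZMod 2] (Fin l → ZMod 2) :=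
    (Matrix.of fun j i => h j i).mulVecLin with hφdef
  have hφ : ∀ w j, φ w j = ∑ i, h j i * w i := by
    intro w j
    simp [hφdef, Matrix.mulVecLin_apply, Matrix.mulVec, dotProduct]
  -- choice of a coordinate in every group
  have hGne : ∀ j, (G j).Nonempty := by
    intro j; rw [← Finset.card_pos, hG]; omega
  choose p hp using hGne
  have hpd : ∀ j j', h j' (p j) = if j' = j then 1 else 0 := by
    intro j j'
    by_cases hjj : j' = j
    · subst hjj
      have := hp j'
      simp only [hGdef, Finset.mem_filter] at this
      simp [one_of_ne _ this.2]
    · rcases hdisj j j' (fun e => hjj e.symm) (p j) with h0 | h0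
      · exfalso
        have := hp j
        simp only [hGdef, Finset.mem_filter] at this
        exact this.2 h0
      · simp [h0, hjj]
  have hsurj : Function.Surjective φ := by
    intro u
    refine ⟨fun i => ∑ j, u j * (if i = p j then 1 else 0), ?_⟩
    funext j'
    rw [hφ]
    have : ∀ i : Fin n, h j' i * (∑ j, u j * (if i = p j then 1 else 0))
        = ∑ j, (if i = p j then h j' i * u j else 0) := by
      intro i
      rw [Finset.mul_sum]
      congr 1; funext j
      by_cases hip : i = p j <;> simp [hip, mul_comm]
    simp_rw [this]
    rw [Finset.sum_comm]
    have : ∀ j : Fin l, (∑ i : Fin n, if i = p j then h j' i * u j else 0)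
        = h j' (p j) * u j := by
      intro j
      rw [Finset.sum_ite_eq' Finset.univ (p j) (fun i => h j' i * u j)]
      simp
    simp_rw [this, hpd]
    simp
  -- the big code D and its cardinality
  have hrange : LinearMap.range φ = ⊤ := LinearMap.range_eq_top.mpr hsurj
  have hker : Module.finrank (ZMod 2) (LinearMap.ker φ) = r * l := by
    have h1 := LinearMap.finrank_range_add_finrank_ker φ
    rw [hrange, finrank_top] at h1
    rw [Module.finrank_pi, Module.finrank_pi] at h1
    simp only [Fintype.card_fin] at h1
    have hn' : n = l * r + l := by rw [hn]; ring
    rw [mul_comm]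
    omega
  have hCD : ∀ c ∈ C, φ c = 0 := by
    intro c hc
    funext j
    rw [hφ]
    exact hdual j c hc
  -- the index finset and the sigma finset of choices
  set F := Finset.filter (fun x => ∑ j, x j ≤ t)
      (Fintype.piFinset fun _ : Fin l => Finset.range (t + 1)) with hF
  set Sig := F.sigma (fun x => Fintype.piFinset fun j => (G j).powersetCard (2 * x j)) with hSigdef
  have hSigcard : Sig.card = ∑ x ∈ F, ∏ j, Nat.choose (r + 1) (2 * x j) := by
    rw [hSigdef, Finset.card_sigma]
    refine Finset.sum_congr rfl fun x _ => ?_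
    rw [Fintype.card_piFinset]
    refine Finset.prod_congr rfl fun j _ => ?_
    rw [Finset.card_powersetCard, hG]
  -- the perturbation vectors
  set v : (Fin l → Finset (Fin n)) → (Fin n → ZMod 2) :=
    fun S i => if ∃ j, i ∈ S j then 1 else 0 with hv
  have hSig_mem : ∀ xS ∈ Sig, (∀ j, xS.2 j ⊆ G j ∧ (xS.2 j).card = 2 * xS.1 j)
      ∧ ∑ j, xS.1 j ≤ t := by
    intro xS hxS
    rw [hSigdef, Finset.mem_sigma] at hxS
    obtain ⟨hx1, hx2⟩ := hxS
    rw [Fintype.mem_piFinset] at hx2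
    rw [hF, Finset.mem_filter] at hx1
    refine ⟨fun j => ?_, hx1.2⟩
    have := hx2 j
    rw [Finset.mem_powersetCard] at this
    exact this
  -- unique group containing a coordinate of a choice
  have hunique : ∀ (S : Fin l → Finset (Fin n)), (∀ j, S j ⊆ G j) →
      ∀ j, ∀ i ∈ G j, ((∃ j', i ∈ S j') ↔ i ∈ S j) := by
    intro S hS j i hi
    constructor
    · rintro ⟨j', hj'⟩
      by_cases hjj : j' = j
      · exact hjj ▸ hj'
      · exact absurd (hS j' hj') (hGd j j' i (fun e => hjj e.symm) hi)
    · intro hij; exact ⟨j, hij⟩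
  -- v S is in the kernel
  have hvker : ∀ (S : Fin l → Finset (Fin n)), (∀ j, S j ⊆ G j ∧ Even (S j).card) →
      φ (v S) = 0 := by
    intro S hS
    funext j
    rw [Pi.zero_apply, hφ]
    have e1 : ∀ i : Fin n, h j i * v S i = if i ∈ G j then v S i else 0 := by
      intro i
      by_cases hi : i ∈ G j
      · have : h j i ≠ 0 := by
          simp only [hGdef, Finset.mem_filter] at hi; exact hi.2
        rw [one_of_ne _ this, one_mul, if_pos hi]
      · have : h j i = 0 := by
          simp only [hGdef, Finset.mem_filter] at hi
          by_contra hne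
          exact hi ⟨Finset.mem_univ i, hne⟩
        rw [this, zero_mul, if_neg hi]
    simp_rw [e1]
    rw [Finset.sum_ite_mem, Finset.univ_inter]
    have e2 : ∀ i ∈ G j, v S i = if i ∈ S j then 1 else 0 := by
      intro i hi
      simp only [hv]
      by_cases hij : i ∈ S j
      · rw [if_pos ((hunique S (fun j => (hS j).1) j i hi).mpr hij), if_pos hij]
      · rw [if_neg (fun he => hij ((hunique S (fun j => (hS j).1) j i hi).mp he)),
          if_neg hij]
    rw [Finset.sum_congr rfl e2, Finset.sum_ite_mem,
      (Finset.inter_eq_right).mpr (hS j).1, Finset.sum_const, nsmul_eq_mul, mul_one]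
    obtain ⟨m, hm⟩ := (hS j).2
    rw [hm]
    have e3 : ((m + m : ℕ) : ZMod 2) = 2 * (m : ZMod 2) := by push_cast; ring
    rw [e3, show (2 : ZMod 2) = 0 from rfl, zero_mul]
  -- weight of v S
  have hvwt : ∀ (S : Fin l → Finset (Fin n)), hammingNorm (v S) ≤ ∑ j, (S j).card := by
    intro S
    have hsub : Finset.filter (fun i => v S i ≠ 0) Finset.univ ⊆ Finset.univ.biUnion S := by
      intro i hi
      rw [Finset.mem_filter] at hi
      rw [Finset.mem_biUnion]
      by_contra hc
      push_neg at hc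
      apply hi.2
      simp only [hv]
      rw [if_neg]
      push_neg
      exact fun j => hc j (Finset.mem_univ j)
    calc hammingNorm (v S) ≤ (Finset.univ.biUnion S).card := Finset.card_le_card hsub
      _ ≤ ∑ j, (S j).card := Finset.card_biUnion_le
  -- the injection
  letI : Fintype ↥C := Fintype.ofFinite _
  letI : Fintype ↥(LinearMap.ker φ) := Fintype.ofFinite _
  set Φ : ↥C × {s // s ∈ Sig} → ↥(LinearMap.ker φ) := fun cs =>
    ⟨(cs.1 : Fin n → ZMod 2) + v cs.2.1.2, by
      rw [LinearMap.mem_ker, map_add, hCD _ cs.1.2, zero_add]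
      exact hvker _ (fun j => ⟨((hSig_mem _ cs.2.2).1 j).1,
        ((hSig_mem _ cs.2.2).1 j).2 ▸ even_two_mul _⟩)⟩ with hΦ
  have hsub2 : ∀ (A B : Fin l → Finset (Fin n)), (∀ j, A j ⊆ G j) → (∀ j, B j ⊆ G j) →
      v A = v B → ∀ j, A j ⊆ B j := by
    intro A B hA hB hAB j i hij
    have hiG : i ∈ G j := hA j hij
    have h1 : v A i = 1 := by simp only [hv]; exact if_pos ⟨j, hij⟩
    have h2 : v B i = 1 := by rw [← hAB]; exact h1
    have hex : ∃ j', i ∈ B j' := by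
      by_contra hc
      simp only [hv] at h2
      rw [if_neg hc] at h2
      exact one_ne_zero h2.symm
    exact (hunique B hB j i hiG).mp hex
  have hΦinj : Function.Injective Φ := by
    rintro ⟨c, s⟩ ⟨c', s'⟩ heq0
    have heq : (c : Fin n → ZMod 2) + v s.1.2 = (c' : Fin n → ZMod 2) + v s'.1.2 :=
      congrArg Subtype.val heq0
    obtain ⟨hs1, hs2⟩ := hSig_mem _ s.2
    obtain ⟨hs1', hs2'⟩ := hSig_mem _ s'.2
    have hwts : hammingNorm (v s.1.2) ≤ 2 * t := by
      calc hammingNorm (v s.1.2) ≤ ∑ j, (s.1.2 j).card := hvwt _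
        _ = ∑ j, 2 * s.1.1 j := Finset.sum_congr rfl fun j _ => (hs1 j).2
        _ = 2 * ∑ j, s.1.1 j := by rw [Finset.mul_sum]
        _ ≤ 2 * t := by clear hSigcard; omega
    have hwts' : hammingNorm (v s'.1.2) ≤ 2 * t := by
      calc hammingNorm (v s'.1.2) ≤ ∑ j, (s'.1.2 j).card := hvwt _
        _ = ∑ j, 2 * s'.1.1 j := Finset.sum_congr rfl fun j _ => (hs1' j).2
        _ = 2 * ∑ j, s'.1.1 j := by rw [Finset.mul_sum]
        _ ≤ 2 * t := by clear hSigcard; omega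
    have hcc : (c : Fin n → ZMod 2) = (c' : Fin n → ZMod 2) := by
      by_contra hne
      have hmem : (c : Fin n → ZMod 2) - (c' : Fin n → ZMod 2) ∈ C := sub_mem c.2 c'.2
      have hne0 : (c : Fin n → ZMod 2) - (c' : Fin n → ZMod 2) ≠ 0 := sub_ne_zero.mpr hne
      have hd := hdist _ hmem hne0
      have hdiff : (c : Fin n → ZMod 2) - (c' : Fin n → ZMod 2)
          = v s'.1.2 - v s.1.2 := by
        linear_combination heq
      have hnorm : hammingNorm ((c : Fin n → ZMod 2) - (c' : Fin n → ZMod 2)) ≤ 4 * t := by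
        rw [hdiff]
        have e4 : hammingNorm (v s'.1.2 - v s.1.2)
            = hammingDist (v s'.1.2) (v s.1.2) := by
          rw [hammingDist_comm, hammingDist_eq_hammingNorm, neg_add_eq_sub]
        have e5 : hammingDist (v s'.1.2) (v s.1.2)
            ≤ hammingNorm (v s'.1.2) + hammingNorm (v s.1.2) := by
          have := hammingDist_triangle (v s'.1.2) 0 (v s.1.2)
          rwa [hammingDist_zero_right, hammingDist_zero_left] at this
        clear hSigcard; omega
      have hpos : 0 < hammingNorm ((c : Fin n → ZMod 2) - (c' : Fin n → ZMod 2)) :=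
        hammingNorm_pos_iff.mpr hne0
      have h4t : 4 * t ≤ d - 1 := by
        rw [ht]
        clear hSigcard; omega
      clear hSigcard; omega
    have hvv : v s.1.2 = v s'.1.2 := by
      rw [hcc] at heq
      exact add_left_cancel heq
    have hSS : s.1.2
        = s'.1.2 := by
      funext j
      exact Finset.Subset.antisymm
        (hsub2 _ _ (fun j => (hs1 j).1) (fun j => (hs1' j).1) hvv j)
        (hsub2 _ _ (fun j => (hs1' j).1) (fun j => (hs1 j).1) hvv.symm j)
    have hxx : s.1.1
        = s'.1.1 := by
      funext j
      have e1 := (hs1 j).2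
      have e2 := (hs1' j).2
      rw [hSS] at e1
      clear hSigcard; omega
    have hss : s.1
        = s'.1 :=
      Sigma.ext hxx (heq_of_eq hSS)
    exact Prod.ext (Subtype.ext hcc) (Subtype.ext hss)
  have hcard := Fintype.card_le_of_injective Φ hΦinj
  rw [Fintype.card_prod, Fintype.card_coe] at hcard
  have hCcard : Fintype.card ↥C = 2 ^ k := by
    rw [Module.card_eq_pow_finrank (K := ZMod 2) (V := ↥C), hk, ZMod.card]
  have hKcard : Fintype.card ↥(LinearMap.ker φ) = 2 ^ (r * l) := by
    rw [Module.card_eq_pow_finrank (K := ZMod 2) (V := ↥(LinearMap.ker φ)), hker, ZMod.card]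
  rw [hCcard, hKcard, hSigcard] at hcard
  have hexp : r * n / (r + 1) = r * l := by
    rw [hn, show r * (l * (r + 1)) = (r * l) * (r + 1) by ring]
    exact Nat.mul_div_cancel _ (Nat.succ_pos r)
  rw [hexp]
  exact hcard
end

section
/- Let n and r be real numbers with r ≥ 2 and n ≥ 2(r+2). Define f(l) = l + log₂( 1 + (2n − l(r+1))(2n − l(r+2))/(2l) ). Then for every real l with n/(r+1) ≤ l ≤ 2n/(r+2), f(l) ≥ n/(r+1) + min{ log₂(1 + rn/2), rn/((r+1)(r+2)) }. -/
private lemma D1 (n z : ℝ) (hz : 4 ≤ z) (hzn : z ≤ n) (h4 : 4*n ≤ z^2) :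
    (z^2-4*n)^2 ≤ z*(z-4)*(2*n-z)^2 := by
  nlinarith [mul_nonneg (sub_nonneg.mpr hzn) (sub_nonneg.mpr h4), mul_nonneg (sub_nonneg.mpr hzn) (by linarith : (0:ℝ) ≤ z - 4), mul_nonneg (sub_nonneg.mpr h4) (by linarith : (0:ℝ) ≤ z - 4), sq_nonneg (n-z), sq_nonneg (z^2-4*n), mul_nonneg (mul_nonneg (sub_nonneg.mpr hzn) (sub_nonneg.mpr h4)) (by linarith : (0:ℝ) ≤ z - 4), sq_nonneg (z-4), mul_nonneg (mul_nonneg (sub_nonneg.mpr hzn) (sub_nonneg.mpr hzn)) (by linarith : (0:ℝ) ≤ z - 4)]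

private lemma Gnn (n z v : ℝ) (hz : 4 ≤ z) (hzn : z ≤ n) (hv : 0 ≤ v) :
    0 ≤ 4*n^2*z^2 - 16*n^2*z + 16*n^2*v - 4*n*v*z^2 + v^2*(2*n-z)^2 := by
  have hn0 : (0:ℝ) ≤ n := by linarith
  rcases le_or_gt (z^2) (4*n) with h|h
  · nlinarith [mul_nonneg (mul_nonneg (mul_nonneg hn0 hn0) (by linarith : (0:ℝ) ≤ z)) (by linarith : (0:ℝ) ≤ z - 4), mul_nonneg (mul_nonneg hn0 hv) (sub_nonneg.mpr h), sq_nonneg (v*(2*n-z))]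
  · have hD := D1 n z hz hzn h.le
    have h2nz : 0 < 2*n - z := by linarith
    have key : 0 ≤ (2*n-z)^2 * (4*n^2*z^2 - 16*n^2*z + 16*n^2*v - 4*n*v*z^2 + v^2*(2*n-z)^2) := by
      nlinarith [sq_nonneg ((2*n-z)^2*v + 2*n*(4*n-z^2)), hD, sq_nonneg n]
    nlinarith [key, mul_pos h2nz h2nz]

private lemma keyQ (n r x : ℝ) (hr : 2 ≤ r) (hn : 2*(r+2) ≤ n) (h1 : n ≤ (r+1)*x) (h2 : (r+2)*x ≤ 2*n) :
    16*n^4 ≤ ((r+1)*(r+2))^2*x^4 - 16*((r+1)*(r+2))*n^2*x^2 + 16*n^2*(n*(2*r+3)-1)*x := by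
  set z := 2*n - (r+1)*x with hzdef
  set v := 2*n - (r+2)*x with hvdef
  have hv : 0 ≤ v := by simp only [hvdef]; linarith
  have hzn : z ≤ n := by simp only [hzdef]; linarith
  have hz4 : 4 ≤ z := by
    have h2' := mul_le_mul_of_nonneg_left h2 (by linarith : (0:ℝ) ≤ r+1)
    nlinarith [h2']
  have hG := Gnn n z v hz4 hzn hv
  rw [hzdef, hvdef] at hG
  linarith [hG]

/-- The key claim in the proof of Theorem 3 of the paper: for real `r ≥ 2` and
`n ≥ 2(r+2)`, the function `f(l) = l + log₂(1 + (2n − l(r+1))(2n − l(r+2))/(2l))`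
satisfies `f(l) ≥ n/(r+1) + min{ log₂(1 + rn/2), rn/((r+1)(r+2)) }` for every
`l ∈ [n/(r+1), 2n/(r+2)]`. -/
theorem stmt_10 (n r : ℝ) (hr : 2 ≤ r) (hn : 2 * (r + 2) ≤ n) :
    ∀ l ∈ Set.Icc (n / (r + 1)) (2 * n / (r + 2)),
      n / (r + 1) + min (Real.logb 2 (1 + r * n / 2)) (r * n / ((r + 1) * (r + 2))) ≤
        l + Real.logb 2 (1 + (2 * n - l * (r + 1)) * (2 * n - l * (r + 2)) / (2 * l)) := by
  intro l hl
  have hr1 : (0:ℝ) < r + 1 := by linarith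
  have hr2 : (0:ℝ) < r + 2 := by linarith
  have hn0 : (0:ℝ) < n := by linarith
  set a : ℝ := n / (r + 1) with hadef
  set b : ℝ := 2 * n / (r + 2) with hbdef
  have ha0 : 0 < a := div_pos hn0 hr1
  have hab : a ≤ b := by
    rw [hadef, hbdef, div_le_div_iff₀ hr1 hr2]; nlinarith
  -- the function h and its derivatives
  set h : ℝ → ℝ := fun y => 2*n^2 * y⁻¹ + ((1 - n*(2*r+3)) + (r+1)*(r+2)/2 * y) with hhdef
  set H' : ℝ → ℝ := fun y => (r+1)*(r+2)/2 - 2*n^2 * (y^2)⁻¹ with hH'def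
  set φ : ℝ → ℝ := fun y => y + Real.log (h y) / Real.log 2 with hφdef
  set Φ' : ℝ → ℝ := fun y => 1 + (H' y / h y) / Real.log 2 with hΦ'def
  set Φ'' : ℝ → ℝ := fun y => ((4*n^2/y^3 * h y - H' y * H' y) / (h y)^2) / Real.log 2 with hΦ''def
  -- basic positivity on the interval
  have hxpos : ∀ x ∈ Set.Icc a b, 0 < x := fun x hx => lt_of_lt_of_le ha0 hx.1
  have hfacts : ∀ x ∈ Set.Icc a b, 0 ≤ 2*n - x*(r+2) ∧ 0 ≤ 2*n - x*(r+1) := by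
    intro x hx
    have hx2 : x * (r+2) ≤ 2*n := by
      have := hx.2
      rw [hbdef, le_div_iff₀ hr2] at this
      linarith
    constructor
    · linarith
    · nlinarith [hxpos x hx]
  have hEq : ∀ x : ℝ, x ≠ 0 → h x = 1 + (2*n - x*(r+1))*(2*n - x*(r+2))/(2*x) := by
    intro x hx
    rw [hhdef]
    field_simp
    ring
  have hpos : ∀ x ∈ Set.Icc a b, 1 ≤ h x := by
    intro x hx
    have hx0 := hxpos x hx
    rw [hEq x hx0.ne']
    have ⟨f2, f1⟩ := hfacts x hx
    have : 0 ≤ (2*n - x*(r+1))*(2*n - x*(r+2))/(2*x) :=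
      div_nonneg (mul_nonneg f1 f2) (by linarith)
    linarith
  -- derivatives
  have hH : ∀ x : ℝ, 0 < x → HasDerivAt h (H' x) x := by
    intro x hx
    have h1 : HasDerivAt (fun y : ℝ => 2*n^2 * y⁻¹) (2*n^2 * (-(x^2)⁻¹)) x :=
      (hasDerivAt_inv hx.ne').const_mul (2*n^2)
    have h2 : HasDerivAt (fun y : ℝ => (1 - n*(2*r+3)) + (r+1)*(r+2)/2 * y) ((r+1)*(r+2)/2) x := by
      simpa using ((hasDerivAt_id' (x := x)).const_mul ((r+1)*(r+2)/2)).const_add (1 - n*(2*r+3))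
    have := h1.add h2
    rw [hhdef, hH'def]
    refine this.congr_deriv ?_
    ring
  have hH2 : ∀ x : ℝ, 0 < x → HasDerivAt H' (4*n^2/x^3) x := by
    intro x hx
    have hsq : HasDerivAt (fun y : ℝ => y^2) (2*x) x := by
      simpa using hasDerivAt_pow 2 x
    have hinv : HasDerivAt (fun y : ℝ => (y^2)⁻¹) (-(2*x) / (x^2)^2) x :=
      hsq.inv (by positivity)
    have := (hasDerivAt_const x ((r+1)*(r+2)/2)).sub (hinv.const_mul (2*n^2))
    rw [hH'def]
    refine this.congr_deriv ?_
    field_simp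
    ring
  have hφ : ∀ x ∈ Set.Icc a b, HasDerivAt φ (Φ' x) x := by
    intro x hx
    have hx0 := hxpos x hx
    have hne : h x ≠ 0 := by have := hpos x hx; linarith
    have := (hasDerivAt_id' (x := x)).add (((hH x hx0).log hne).div_const (Real.log 2))
    rw [hφdef, hΦ'def]
    exact this
  have hφ' : ∀ x ∈ Set.Icc a b, HasDerivAt Φ' (Φ'' x) x := by
    intro x hx
    have hx0 := hxpos x hx
    have hne : h x ≠ 0 := by have := hpos x hx; linarith
    have := (hasDerivAt_const x (1:ℝ)).add
      ((((hH2 x hx0).div (hH x hx0) hne)).div_const (Real.log 2))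
    rw [hΦ'def, hΦ''def]
    refine this.congr_deriv ?_
    simp
  -- second derivative nonpositive
  have hΦ''nonpos : ∀ x ∈ Set.Ioo a b, Φ'' x ≤ 0 := by
    intro x hx
    have hx' : x ∈ Set.Icc a b := Set.mem_Icc_of_Ioo hx
    have hx0 := hxpos x hx'
    have h1x : n ≤ (r+1)*x := by
      have := hx'.1
      rw [hadef, div_le_iff₀ hr1] at this
      linarith
    have h2x : (r+2)*x ≤ 2*n := by
      have := hx'.2
      rw [hbdef, le_div_iff₀ hr2] at this
      linarith
    have hQ := keyQ n r x hr hn h1x h2x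
    have hident : H' x * H' x - 4*n^2/x^3 * h x =
        (((r+1)*(r+2))^2*x^4 - 16*((r+1)*(r+2))*n^2*x^2 + 16*n^2*(n*(2*r+3)-1)*x - 16*n^4)/(4*x^4) := by
      rw [hhdef, hH'def]
      field_simp
      ring
    have hnum : 4*n^2/x^3 * h x - H' x * H' x ≤ 0 := by
      have h4x : (0:ℝ) < 4*x^4 := by positivity
      have : 0 ≤ H' x * H' x - 4*n^2/x^3 * h x := by
        rw [hident]
        apply div_nonneg _ h4x.le
        linarith
      linarith
    rw [hΦ''def]
    have hlog2 : (0:ℝ) ≤ Real.log 2 := Real.log_nonneg one_le_two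
    have h1 : 0 ≤ (-(4*n^2/x^3 * h x - H' x * H' x)) / (h x)^2 :=
      div_nonneg (by linarith) (sq_nonneg _)
    rw [neg_div] at h1
    have h2 : 0 ≤ (-((4*n^2/x^3 * h x - H' x * H' x) / (h x)^2)) / Real.log 2 :=
      div_nonneg (by linarith) hlog2
    rw [neg_div] at h2
    linarith
  -- concavity
  have hconc : ConcaveOn ℝ (Set.Icc a b) φ := by
    apply concaveOn_of_hasDerivWithinAt2_nonpos (f' := Φ') (f'' := Φ'') (convex_Icc a b)
    · exact fun x hx => ((hφ x hx).continuousAt).continuousWithinAt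
    · intro x hx
      rw [interior_Icc] at hx
      exact ((hφ x (Set.mem_Icc_of_Ioo hx)).hasDerivWithinAt)
    · intro x hx
      rw [interior_Icc] at hx
      exact ((hφ' x (Set.mem_Icc_of_Ioo hx)).hasDerivWithinAt)
    · intro x hx
      rw [interior_Icc] at hx
      exact hΦ''nonpos x hx
  -- endpoint values
  have hamem : a ∈ Set.Icc a b := Set.left_mem_Icc.mpr hab
  have hbmem : b ∈ Set.Icc a b := Set.right_mem_Icc.mpr hab
  have hmin := hconc.ge_on_segment hamem hbmem (by rw [segment_eq_Icc hab]; exact hl)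
  have hha : h a = 1 + r*n/2 := by
    rw [hhdef, hadef]
    field_simp
    ring
  have hhb : h b = 1 := by
    rw [hhdef, hbdef]
    field_simp
    ring
  have hφa : φ a = a + Real.logb 2 (1 + r*n/2) := by
    rw [hφdef]
    simp only [hha, Real.logb]
  have hφb : φ b = b := by
    rw [hφdef]
    simp [hhb]
  have hbB : b = a + r*n/((r+1)*(r+2)) := by
    rw [hadef, hbdef]
    field_simp
    ring
  have hl0 : (0:ℝ) < l := hxpos l hl
  have hφl : φ l = l + Real.logb 2 (1 + (2*n - l*(r+1))*(2*n - l*(r+2))/(2*l)) := by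
    rw [hφdef]
    simp only [hEq l hl0.ne', Real.logb]
  have hfin : a + min (Real.logb 2 (1 + r*n/2)) (r*n/((r+1)*(r+2))) ≤ min (φ a) (φ b) := by
    apply le_min
    · rw [hφa]
      exact add_le_add_right (min_le_left _ _) a
    · rw [hφb, hbB]
      exact add_le_add_right (min_le_right _ _) a
  calc n / (r+1) + min (Real.logb 2 (1 + r * n / 2)) (r * n / ((r + 1) * (r + 2)))
      ≤ min (φ a) (φ b) := hfin
    _ ≤ φ l := hmin
    _ = _ := hφl
end

section
/- Let t ≥ 1 and m ≥ 1 be integers, let F = 𝔽_{2^{2t}} be the field with 2^{2t} elements, let a₁,…,a_{2^t} ∈ F be such that any subset of at most 4 of the aⱼ is linearly independent over 𝔽₂, and let β₁,…,β_l ∈ F^m be nonzero vectors that are pairwise linearly independent over F. Set n = l(2^t + 1), and let C ⊆ 𝔽₂ⁿ be the set of vectors c = (c_{i,j})_{1 ≤ i ≤ l, 0 ≤ j ≤ 2^t} satisfying: (a) Σ_{j=0}^{2^t} c_{i,j} = 0 in 𝔽₂ for every i ∈ {1,…,l}, and (b) Σ_{i=1}^{l} ( Σ_{j=1}^{2^t}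 c_{i,j} aⱼ ) βᵢ = 0 in F^m. Then C is a linear subspace of 𝔽₂ⁿ of dimension at least n − l − 2tm, C has locality 2^t, and every nonzero vector of C has Hamming weight at least 6. -/
set_option maxHeartbeats 2000000
set_option synthInstance.maxHeartbeats 1000000

/-- Construction 1 / Theorem 4 of the paper (dimension, locality and distance):
given `a₁,…,a_{2^t} ∈ 𝔽_{2^{2t}}` any at most 4 of which are `𝔽₂`-linearly
independent, and pairwise `𝔽_{2^{2t}}`-linearly independent nonzero vectors
`β₁,…,β_l ∈ 𝔽_{2^{2t}}^m`, the binary code `C` of length `n = l(2^t+1)` defined by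
the parity checks (a) `Σ_j c_{i,j} = 0` for each `i` and
(b) `Σ_i (Σ_{j≥1} c_{i,j} a_j) β_i = 0` is a linear subspace of dimension at least
`n − l − 2tm`, has locality `2^t`, and has minimum Hamming weight at least `6`. -/
theorem stmt_13 (t m l : ℕ) (ht : 1 ≤ t) (hm : 1 ≤ m)
    (a : Fin (2 ^ t) → GaloisField 2 (2 * t))
    (ha : ∀ S : Finset (Fin (2 ^ t)), S.card ≤ 4 →
      LinearIndependent (ZMod 2) (fun j : S => a j))
    (β : Fin l → (Fin m → GaloisField 2 (2 * t)))
    (hβ0 : ∀ i, β i ≠ 0)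
    (hβ : ∀ i i', i ≠ i' → LinearIndependent (GaloisField 2 (2 * t)) ![β i, β i']) :
    ∃ W : Submodule (ZMod 2) (Fin l × Fin (2 ^ t + 1) → ZMod 2),
      (W : Set (Fin l × Fin (2 ^ t + 1) → ZMod 2)) =
        {c | (∀ i : Fin l, ∑ j, c (i, j) = 0) ∧
             ∑ i : Fin l, (∑ j : Fin (2 ^ t), c (i, j.succ) • a j) • β i = 0} ∧
      (l * (2 ^ t + 1) : ℤ) - l - 2 * t * m ≤ (Module.finrank (ZMod 2) W : ℤ) ∧
      (∀ p : Fin l × Fin (2 ^ t + 1), ∃ h : Fin l × Fin (2 ^ t + 1) → ZMod 2,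
        (∀ c ∈ W, ∑ q, h q * c q = 0) ∧ h p ≠ 0 ∧ hammingNorm h ≤ 2 ^ t + 1) ∧
      (∀ c ∈ W, c ≠ 0 → 6 ≤ hammingNorm c) := by
  classical
  -- the parity-check linear map
  let φ : (Fin l × Fin (2 ^ t + 1) → ZMod 2) →ₗ[ZMod 2]
      ((Fin l → ZMod 2) × (Fin m → GaloisField 2 (2 * t))) :=
    { toFun := fun c => (fun i => ∑ j, c (i, j),
        ∑ i : Fin l, (∑ j : Fin (2 ^ t), c (i, j.succ) • a j) • β i)
      map_add' := by
        intro x y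
        refine Prod.ext (funext fun i => ?_) ?_
        · simp [Finset.sum_add_distrib]
        · simp [add_smul, Finset.sum_add_distrib]
      map_smul' := by
        intro r x
        refine Prod.ext (funext fun i => ?_) ?_
        · simp [Finset.mul_sum]
        · simp only [Pi.smul_apply, smul_eq_mul, mul_smul, ← Finset.smul_sum,
            smul_assoc, RingHom.id_apply, Prod.smul_snd] }
  refine ⟨LinearMap.ker φ, ?_, ?_, ?_, ?_⟩
  · -- the kernel is exactly the stated set
    ext c
    simp [φ, LinearMap.mem_ker, Prod.ext_iff, funext_iff]
  · -- dimension bound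
    have h1 := LinearMap.finrank_range_add_finrank_ker φ
    have hdom : Module.finrank (ZMod 2) (Fin l × Fin (2 ^ t + 1) → ZMod 2)
        = l * (2 ^ t + 1) := by
      rw [Module.finrank_fintype_fun_eq_card]; simp
    have hF : Module.finrank (ZMod 2) (GaloisField 2 (2 * t)) = 2 * t :=
      GaloisField.finrank 2 (by omega)
    have hpi : Module.finrank (ZMod 2) (Fin m → GaloisField 2 (2 * t)) = 2 * t * m := by
      have := Module.finrank_pi_fintype (ZMod 2) (M := fun _ : Fin m => GaloisField 2 (2 * t))
      rw [this]
      simp [hF, mul_comm]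
    have hcod : Module.finrank (ZMod 2) ((Fin l → ZMod 2) × (Fin m → GaloisField 2 (2 * t)))
        = l + 2 * t * m := by
      rw [Module.finrank_prod, Module.finrank_fintype_fun_eq_card, hpi]
      simp
    have h2 : Module.finrank (ZMod 2) (LinearMap.range φ) ≤ l + 2 * t * m := by
      rw [← hcod]; exact Submodule.finrank_le _
    have hnat : l * (2 ^ t + 1) ≤
        Module.finrank (ZMod 2) (LinearMap.ker φ) + (l + 2 * t * m) := by
      rw [← hdom, ← h1]
      omega
    have hcast : ((l * (2 ^ t + 1) : ℕ) : ℤ) ≤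
        (Module.finrank (ZMod 2) (LinearMap.ker φ) : ℤ) + ((l + 2 * t * m : ℕ) : ℤ) := by
      exact_mod_cast hnat
    push_cast at hcast
    linarith
  · -- locality
    intro p
    refine ⟨fun q => if q.1 = p.1 then 1 else 0, ?_, by simp, ?_⟩
    · intro c hc
      have hA : ∀ i : Fin l, ∑ j, c (i, j) = 0 := by
        have := (LinearMap.mem_ker.mp hc)
        have := congrFun (congrArg Prod.fst this)
        intro i; exact congrFun (congrArg Prod.fst (LinearMap.mem_ker.mp hc)) i
      rw [Fintype.sum_prod_type]
      have : ∀ i : Fin l, ∑ j, (if i = p.1 then (1 : ZMod 2) else 0) * c (i, j)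
          = if i = p.1 then ∑ j, c (i, j) else 0 := by
        intro i
        by_cases h : i = p.1 <;> simp [h]
      simp only [this]
      rw [Finset.sum_ite_eq' Finset.univ p.1 (fun i => ∑ j, c (i, j))]
      simp [hA p.1]
    · refine le_trans (Finset.card_le_card (t := ({p.1} : Finset (Fin l)) ×ˢ
          (Finset.univ : Finset (Fin (2 ^ t + 1)))) ?_) (by simp)
      intro q hq
      rw [Finset.mem_filter] at hq
      rw [Finset.mem_product]
      refine ⟨Finset.mem_singleton.mpr ?_, Finset.mem_univ _⟩
      by_contra h
      simp [h] at hq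
  · -- minimum distance
    intro c hc hc0
    obtain ⟨hA, hB⟩ : (∀ i : Fin l, ∑ j, c (i, j) = 0) ∧
        ∑ i : Fin l, (∑ j : Fin (2 ^ t), c (i, j.succ) • a j) • β i = 0 := by
      have := LinearMap.mem_ker.mp hc
      exact ⟨fun i => congrFun (congrArg Prod.fst this) i, congrArg Prod.snd this⟩
    by_contra hlt
    push_neg at hlt
    have h5 : hammingNorm c ≤ 5 := by omega
    set S : Fin l → Finset (Fin (2 ^ t + 1)) :=
      fun i => Finset.univ.filter (fun j => c (i, j) ≠ 0) with hSdef
    have hone : ∀ x : ZMod 2, x ≠ 0 → x = 1 := by decide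
    have hsplit : hammingNorm c = ∑ i, (S i).card := by
      simp only [hammingNorm, Finset.card_filter, Fintype.sum_prod_type, hSdef]
    have heven : ∀ i, 2 ∣ (S i).card := by
      intro i
      have h0 : ∑ j, c (i, j) = ((S i).card : ZMod 2) := by
        rw [← Finset.sum_filter_ne_zero]
        rw [Finset.sum_congr rfl (fun j hj => hone _ (Finset.mem_filter.mp hj).2)]
        simp [hSdef]
      rw [hA i] at h0
      exact (ZMod.natCast_eq_zero_iff _ 2).mp h0.symm
    have hcardle : ∀ i, (S i).card ≤ 5 := by
      intro i
      calc (S i).card ≤ ∑ i', (S i').card :=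
            Finset.single_le_sum (f := fun i' => (S i').card)
              (fun _ _ => Nat.zero_le _) (Finset.mem_univ i)
        _ ≤ 5 := by omega
    -- key: for a nonempty block the 𝔽_{2^{2t}} sum is nonzero
    have hx : ∀ i : Fin l, (S i).Nonempty →
        (∑ j : Fin (2 ^ t), c (i, j.succ) • a j) ≠ 0 := by
      intro i hne hzero
      set T : Finset (Fin (2 ^ t)) :=
        Finset.univ.filter (fun j => c (i, j.succ) ≠ 0) with hTdef
      have hTsub : T.card ≤ (S i).card := by
        apply Finset.card_le_card_of_injOn (fun j => j.succ)
        · intro j hj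
          simp only [hTdef, Finset.mem_coe, Finset.mem_filter] at hj
          simp [hSdef, hj.2]
        · exact (Fin.succ_injective _).injOn
      have hT4 : T.card ≤ 4 := by
        have := heven i; have := hcardle i
        rcases Nat.lt_or_ge (S i).card 5 with h | h
        · omega
        · omega
      have hTzero : ∑ j ∈ T, c (i, j.succ) • a j = 0 := by
        rw [← hzero]
        refine Finset.sum_subset (Finset.subset_univ _) ?_
        intro j _ hj
        simp only [hTdef, Finset.mem_filter, Finset.mem_univ, true_and, not_not] at hj
        simp [hj]
      have hli := ha T hT4
      rw [Fintype.linearIndependent_iff] at hli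
      have hall : ∀ j : T, c (i, (j : Fin (2 ^ t)).succ) = 0 := by
        apply hli (fun j : T => c (i, (j : Fin (2 ^ t)).succ))
        rw [← Finset.sum_attach T (fun j => c (i, j.succ) • a j)] at hTzero
        exact hTzero
      have hTc : ∀ j : Fin (2 ^ t), c (i, j.succ) = 0 := by
        intro j
        by_contra hcj
        exact hcj (hall ⟨j, by simp [hTdef, hcj]⟩)
      have hSsub : S i ⊆ {0} := by
        intro j hj
        simp only [hSdef, Finset.mem_filter] at hj
        induction j using Fin.cases with
        | zero => simp
        | succ j' => exact absurd (hTc j') hj.2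
      have : (S i).card ≤ 1 := le_trans (Finset.card_le_card hSsub) (by simp)
      have := heven i
      have : (S i).card = 0 := by omega
      rw [Finset.card_eq_zero] at this
      exact hne.ne_empty this
    -- there are at most two nonempty blocks
    set N : Finset (Fin l) := Finset.univ.filter (fun i => (S i).Nonempty) with hNdef
    have hxN : ∀ i ∉ N, (∑ j : Fin (2 ^ t), c (i, j.succ) • a j) = 0 := by
      intro i hi
      simp only [hNdef, Finset.mem_filter, Finset.mem_univ, true_and,
        Finset.not_nonempty_iff_eq_empty] at hi
      apply Finset.sum_eq_zero
      intro j _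
      have : c (i, j.succ) = 0 := by
        by_contra hcj
        have : j.succ ∈ S i := by simp [hSdef, hcj]
        simp [hi] at this
      simp [this]
    have hBN : ∑ i ∈ N, (∑ j : Fin (2 ^ t), c (i, j.succ) • a j) • β i = 0 := by
      rw [← hB]
      refine (Finset.sum_subset
        (f := fun i => (∑ j : Fin (2 ^ t), c (i, j.succ) • a j) • β i)
        (Finset.subset_univ N) ?_)
      intro i _ hi
      show (∑ j : Fin (2 ^ t), c (i, j.succ) • a j) • β i = 0
      rw [hxN i hi, zero_smul]
    have hN2 : N.card ≤ 2 := by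
      have h2N : N.card • 2 ≤ ∑ i ∈ N, (S i).card := by
        apply Finset.card_nsmul_le_sum
        intro i hi
        have hne : (S i).Nonempty := by simpa [hNdef] using hi
        have := heven i
        have : 0 < (S i).card := Finset.card_pos.mpr hne
        omega
      have hsub : ∑ i ∈ N, (S i).card ≤ ∑ i, (S i).card :=
        Finset.sum_le_sum_of_subset (Finset.subset_univ _)
      simp only [smul_eq_mul] at h2N
      omega
    have hNc012 : N.card = 0 ∨ N.card = 1 ∨ N.card = 2 := by omega
    rcases hNc012 with hNc | hNc | hNc
    · -- no nonempty block: c = 0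
      rw [Finset.card_eq_zero] at hNc
      apply hc0
      funext q
      have hSe : S q.1 = ∅ := by
        by_contra h
        have hqN : q.1 ∈ N := by
          simp only [hNdef, Finset.mem_filter, Finset.mem_univ, true_and]
          exact Finset.nonempty_iff_ne_empty.mpr h
        rw [hNc] at hqN
        exact absurd hqN (Finset.notMem_empty _)
      simp only [Pi.zero_apply]
      by_contra hq
      have hmem : q.2 ∈ S q.1 := by
        simp only [hSdef, Finset.mem_filter, Finset.mem_univ, true_and]
        exact fun h => hq (by rwa [Prod.mk.eta] at h)
      rw [hSe] at hmem
      exact absurd hmem (Finset.notMem_empty _)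
    · -- one nonempty block
      obtain ⟨i, hi⟩ := Finset.card_eq_one.mp hNc
      rw [hi, Finset.sum_singleton] at hBN
      have hiN : i ∈ N := by rw [hi]; simp
      have hxne := hx i (by simpa [hNdef] using hiN)
      rcases smul_eq_zero.mp hBN with h | h
      · exact hxne h
      · exact hβ0 i h
    · -- two nonempty blocks
      obtain ⟨i, i', hii', hN⟩ := Finset.card_eq_two.mp hNc
      rw [hN, Finset.sum_pair hii'] at hBN
      have hiN : i ∈ N := by rw [hN]; simp
      have hiN' : i' ∈ N := by rw [hN]; simp
      have h1 := hx i (by simpa [hNdef] using hiN)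
      have h2 := hx i' (by simpa [hNdef] using hiN')
      have := (LinearIndependent.pair_iff.mp (hβ i i' hii')) _ _ hBN
      exact h1 this.1
end

section
/- Let s and t be positive integers with 2t dividing s, s/(2t) ≥ 2, and (s,t) ≠ (4,1). Set r = 2^t and n = (2^s − 1)/(2^t − 1). Then every k-dimensional linear subspace C of 𝔽₂ⁿ whose nonzero vectors all have Hamming weight at least 5 and which has locality r satisfies k ≤ rn/(r+1) − s. -/
open Finset

private lemma greedy {n : ℕ} (H : Set (Fin n → ZMod 2))
    (hcov : ∀ i : Fin n, ∃ h ∈ H, h i ≠ 0) :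
    ∀ S : Finset (Fin n), ∃ (ℓ : ℕ) (v : Fin ℓ → (Fin n → ZMod 2)) (p : Fin ℓ → Fin n),
      (∀ j, v j ∈ H) ∧ (∀ i ∈ S, ∃ j, v j i ≠ 0) ∧ (∀ j, p j ∈ S) ∧
      (∀ j, v j (p j) ≠ 0) ∧ (∀ j' j : Fin ℓ, j' < j → v j' (p j) = 0) := by
  intro S
  induction S using Finset.strongInduction with
  | _ S ih =>
    rcases S.eq_empty_or_nonempty with rfl | ⟨i, hi⟩
    · exact ⟨0, Fin.elim0, Fin.elim0, fun j => j.elim0, fun i hi => absurd hi (by simp),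
        fun j => j.elim0, fun j => j.elim0, fun j' j => j'.elim0⟩
    · obtain ⟨h, hH, hhi⟩ := hcov i
      have hlt : S.filter (fun i' => h i' = 0) ⊂ S := by
        refine Finset.filter_ssubset.mpr ⟨i, hi, by simpa using hhi⟩
      obtain ⟨ℓ, v, p, h1, h2, h3, h4, h5⟩ := ih _ hlt
      refine ⟨ℓ + 1, Fin.cons h v, Fin.cons i p, ?_, ?_, ?_, ?_, ?_⟩
      · intro j
        induction j using Fin.cases with
        | zero => simpa using hH
        | succ j => simpa using h1 j
      · intro i' hi'
        by_cases hzi : h i' = 0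
        · obtain ⟨j, hj⟩ := h2 i' (Finset.mem_filter.mpr ⟨hi', hzi⟩)
          exact ⟨j.succ, by simpa using hj⟩
        · exact ⟨0, by simpa using hzi⟩
      · intro j
        induction j using Fin.cases with
        | zero => simpa using hi
        | succ j =>
          have := h3 j
          simp only [Fin.cons_succ]
          exact (Finset.mem_filter.mp this).1
      · intro j
        induction j using Fin.cases with
        | zero => simpa using hhi
        | succ j => simpa using h4 j
      · intro j' j hj
        induction j using Fin.cases with
        | zero => exact absurd hj (by simp [Fin.not_lt_zero])
        | succ j =>
          induction j' using Fin.cases with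
          | zero =>
            have := h3 j
            simp only [Fin.cons_succ, Fin.cons_zero]
            exact (Finset.mem_filter.mp this).2
          | succ j' =>
            have hlt' : j' < j := by
              simpa [Fin.succ_lt_succ_iff] using hj
            simpa using h5 j' j hlt'

private lemma pow_lin1 : ∀ s : ℕ, 6 ≤ s → 2 * s + 4 ≤ 2 ^ (s - 2) := by
  intro s hs
  induction s with
  | zero => omega
  | succ m ih =>
    rcases Nat.lt_or_ge m 6 with h | h
    · have hm : m = 5 := by omega
      subst hm; norm_num
    · have h1 := ih (by omega)
      have h2 : m + 1 - 2 = (m - 2) + 1 := by omega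
      rw [h2, pow_succ]
      omega

private lemma pow_lin2 : ∀ u : ℕ, 4 ≤ u → 6 * u + 6 ≤ 2 ^ (u + 1) := by
  intro u hu
  induction u with
  | zero => omega
  | succ m ih =>
    rcases Nat.lt_or_ge m 4 with h | h
    · have hm : m = 3 := by omega
      subst hm; norm_num
    · have h1 := ih (by omega)
      rw [pow_succ]
      omega

/-- key step inequality -/
private lemma step_ineq (x y c Z : ℕ) (hx : 3 ≤ x) (hy : 3 * c ≤ y) (hZ : 8 ≤ Z) :
    (x + 1) * (y + c) * (Z + 1) ≤ 2 * (x * y * Z) := by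
  nlinarith [Nat.mul_le_mul (Nat.mul_le_mul (show 3*(x+1) ≤ 4*x by omega)
    (show 3*(y+c) ≤ 4*y by omega)) (show 8*(Z+1) ≤ 9*Z by omega)]

/-- master induction -/
private lemma MI (m r s : ℕ) (hm8 : 8 ≤ m) (hms : s + 2 ≤ m)
    (hmr : (s + 2) * (r + 2) ≤ m * r) :
    ∀ e, e ≤ s - 1 → (m + e) * (m * r) ≤ 2 ^ e * ((m - e) * (m * r - e * (r + 2))) := by
  intro e he
  induction e with
  | zero => simp
  | succ e ih =>
    have he' : e ≤ s - 1 := by omega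
    have ihe := ih he'
    -- abbreviations
    have hes : e + 1 ≤ s - 1 := he
    have hXm : e + 4 ≤ m := by omega
    have hY : e * (r + 2) + 4 * (r + 2) ≤ m * r := by
      calc e * (r + 2) + 4 * (r + 2) = (e + 4) * (r + 2) := by ring
      _ ≤ (s + 2) * (r + 2) := by
            have : e + 4 ≤ s + 2 := by omega
            exact Nat.mul_le_mul_right _ this
      _ ≤ m * r := hmr
    set X := m - e with hX
    set Y := m * r - e * (r + 2) with hYdef
    set Z := m + e with hZ
    have hX3 : 3 + 1 ≤ X := by omega
    have hY3 : 3 * (r + 2) + (r + 2) ≤ Y := by omega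
    have hZ8 : 8 ≤ Z := by omega
    have hstep : (X) * (Y) * (Z + 1) ≤ 2 * ((X - 1) * (Y - (r + 2)) * Z) := by
      have := step_ineq (X - 1) (Y - (r + 2)) (r + 2) Z (by omega) (by omega) hZ8
      have e1 : X - 1 + 1 = X := by omega
      have e2 : Y - (r + 2) + (r + 2) = Y := by omega
      rwa [e1, e2] at this
    have hmain : Z * ((Z + 1) * (m * r)) ≤ Z * (2 ^ (e + 1) * ((X - 1) * (Y - (r + 2)))) := by
      calc Z * ((Z + 1) * (m * r)) = (Z * (m*r)) * (Z+1) := by ring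
      _ ≤ (2 ^ e * (X * Y)) * (Z + 1) := by
            exact Nat.mul_le_mul_right _ (by simpa [mul_comm] using ihe)
      _ = 2 ^ e * (X * Y * (Z + 1)) := by ring
      _ ≤ 2 ^ e * (2 * ((X - 1) * (Y - (r + 2)) * Z)) := Nat.mul_le_mul_left _ hstep
      _ = Z * (2 ^ (e + 1) * ((X - 1) * (Y - (r + 2)))) := by ring
    have hfin := Nat.le_of_mul_le_mul_left hmain (by omega : 0 < Z)
    have e3 : m - (e + 1) = X - 1 := by omega
    have e4 : m * r - (e + 1) * (r + 2) = Y - (r + 2) := by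
      have : (e+1) * (r+2) = e * (r+2) + (r+2) := by ring
      omega
    rw [e3, e4]
    calc (m + (e + 1)) * (m * r) = (Z + 1) * (m * r) := by ring
    _ ≤ 2 ^ (e + 1) * ((X - 1) * (Y - (r + 2))) := hfin

private lemma chain3_help (N L P : ℕ) (h1 : N ^ 2 ≤ L * (2 * P + N)) :
    N * (N - L) ≤ 2 * (P * L) := by
  have h2 : N * (N - L) = N * N - N * L := Nat.mul_sub N N L
  have h3 : L * (2 * P + N) = 2 * (P * L) + L * N := by ring
  have h4 : N * L = L * N := mul_comm N L
  have h5 : N ^ 2 = N * N := sq N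
  omega

private lemma two_choose_two (x : ℕ) : 2 * x.choose 2 + x = x ^ 2 := by
  rcases x with _ | y
  · simp
  · have h1 : (y + 1).choose 2 = (y + 1) * y / 2 := by
      rw [Nat.choose_two_right]
      simp
    have h2 : 2 ∣ (y + 1) * y := by
      rcases Nat.even_or_odd y with he | ho
      · exact Dvd.dvd.mul_left he.two_dvd _
      · exact Dvd.dvd.mul_right (Even.two_dvd (Odd.add_one ho)) _
    rw [h1, Nat.mul_div_cancel' h2]
    ring

set_option maxHeartbeats 1000000 in
/-- Optimality statement in Theorem 4 of the paper: for positive integers `s, t`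
with `2t ∣ s`, `s/(2t) ≥ 2` and `(s,t) ≠ (4,1)`, with `r = 2^t` and
`n = (2^s − 1)/(2^t − 1)`, every `k`-dimensional binary linear code of length `n`,
minimum Hamming weight at least `5` and locality `r` satisfies
`k ≤ rn/(r+1) − s`. -/
theorem stmt_16 (s t : ℕ) (hs : 0 < s) (ht : 0 < t) (hdvd : 2 * t ∣ s)
    (hst : 2 ≤ s / (2 * t)) (hne : ¬(s = 4 ∧ t = 1))
    (r n : ℕ) (hr : r = 2 ^ t) (hn : n = (2 ^ s - 1) / (2 ^ t - 1))
    (k : ℕ) (C : Submodule (ZMod 2) (Fin n → ZMod 2))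
    (hk : Module.finrank (ZMod 2) C = k)
    (hdist : ∀ c ∈ C, c ≠ 0 → 5 ≤ hammingNorm c)
    (hloc : ∀ i : Fin n, ∃ h : Fin n → ZMod 2,
      (∀ c ∈ C, ∑ i', h i' * c i' = 0) ∧ h i ≠ 0 ∧ hammingNorm h ≤ r + 1) :
    (k : ℤ) ≤ ((r * n / (r + 1) : ℕ) : ℤ) - (s : ℤ) := by
  -- number theory setup
  obtain ⟨q, hq⟩ := hdvd
  have hq2 : 2 ≤ q := by
    have h := hst
    rw [hq, Nat.mul_div_cancel_left q (by omega : 0 < 2 * t)] at h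
    exact h
  have hs4t : 4 * t ≤ s := by
    calc 4 * t = 2 * t * 2 := by ring
    _ ≤ 2 * t * q := Nat.mul_le_mul_left _ hq2
    _ = s := hq.symm
  have h2t : 2 ≤ 2 ^ t := Nat.one_lt_two_pow_iff.mpr (by omega)
  have h2s : 2 ≤ 2 ^ s := Nat.one_lt_two_pow_iff.mpr (by omega)
  have h22t : 4 ≤ 2 ^ (2 * t) := by
    calc (4:ℕ) = 2 ^ 2 := by norm_num
    _ ≤ 2 ^ (2*t) := Nat.pow_le_pow_right (by norm_num) (by omega)
  -- n * (2^t - 1) = 2^s - 1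
  have hdvd1 : (2 ^ t - 1) ∣ (2 ^ s - 1) := by
    have hd := Nat.sub_dvd_pow_sub_pow (2 ^ t) 1 (2 * q)
    rw [one_pow, ← pow_mul, show t * (2 * q) = s by rw [hq]; ring] at hd
    exact hd
  have hn1 : n * (2 ^ t - 1) = 2 ^ s - 1 := by
    rw [hn]; exact Nat.div_mul_cancel hdvd1
  set m := (2 ^ s - 1) / (2 ^ (2 * t) - 1) with hmdef
  have hdvd2 : (2 ^ (2 * t) - 1) ∣ (2 ^ s - 1) := by
    have hd := Nat.sub_dvd_pow_sub_pow (2 ^ (2 * t)) 1 q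
    rw [one_pow, ← pow_mul, show 2 * t * q = s from hq.symm] at hd
    exact hd
  have hm1 : m * (2 ^ (2 * t) - 1) = 2 ^ s - 1 := Nat.div_mul_cancel hdvd2
  have hfact : (2 ^ t + 1) * (2 ^ t - 1) = 2 ^ (2 * t) - 1 := by
    have h2 : (2:ℕ) ^ (2 * t) = 2 ^ t * 2 ^ t := by rw [two_mul, pow_add]
    obtain ⟨b, hb⟩ : ∃ b, 2 ^ t = b + 1 := ⟨2 ^ t - 1, by omega⟩
    rw [h2, hb]
    have e1 : (b + 1) * (b + 1) = b * b + 2 * b + 1 := by ring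
    have e2 : (b + 1 + 1) * (b + 1 - 1) = b * b + 2 * b := by
      simp only [Nat.add_sub_cancel]; ring
    omega
  have hnm : n = m * (r + 1) := by
    have hcancel : n * (2 ^ t - 1) = (m * (2 ^ t + 1)) * (2 ^ t - 1) := by
      rw [hn1, mul_assoc, hfact, hm1]
    have := Nat.eq_of_mul_eq_mul_right (show 0 < 2 ^ t - 1 by omega) hcancel
    rw [this, hr]
  -- m lower bound
  set u := s - 2 * t with hudef
  have hu2t : 2 * t ≤ u := by omega
  have hsu : s = u + 2 * t := by omega
  have hmlb : 2 ^ u + 1 ≤ m := by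
    by_contra hcon
    push_neg at hcon
    have hm' : m ≤ 2 ^ u := by omega
    have : m * (2 ^ (2*t) - 1) ≤ 2 ^ u * (2 ^ (2*t) - 1) :=
      Nat.mul_le_mul_right _ hm'
    rw [hm1] at this
    have hpow : 2 ^ u * 2 ^ (2*t) = 2 ^ s := by rw [← pow_add, ← hsu]
    have h2u : 2 ≤ 2 ^ u := Nat.one_lt_two_pow_iff.mpr (by omega)
    have h2u2t : 2 ^ (2*t) ≤ 2 ^ u := Nat.pow_le_pow_right (by norm_num) hu2t
    have : 2 ^ s - 1 ≤ 2 ^ u * 2 ^ (2*t) - 2 ^ u := by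
      calc 2 ^ s - 1 ≤ 2 ^ u * (2 ^ (2*t) - 1) := this
      _ = 2 ^ u * 2 ^ (2*t) - 2 ^ u := by
          rw [Nat.mul_sub, Nat.mul_one]
    omega
  -- s ≥ 6
  have hs6 : 6 ≤ s := by
    rcases Nat.eq_or_lt_of_le ht with h1 | h1
    · -- t = 1
      have ht1 : t = 1 := h1.symm
      subst ht1
      have : s ≠ 4 := fun hc => hne ⟨hc, rfl⟩
      omega
    · omega
  -- key1 : 2^s ≤ m * r * (r+1)
  have hkey1 : 2 ^ s ≤ m * r * (r + 1) := by
    have hm2 : 2 ^ s ≤ m * 2 ^ (2 * t) := by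
      have : m * 2 ^ (2*t) = m * (2 ^ (2*t) - 1) + m := by
        have : 1 ≤ 2 ^ (2*t) := by omega
        rw [Nat.mul_sub, Nat.mul_one]
        have hle : m ≤ m * 2 ^ (2*t) := Nat.le_mul_of_pos_right m (by omega)
        omega
      rw [this, hm1]
      have hm0 : 1 ≤ m := by
        nlinarith [hmlb, Nat.one_le_two_pow (n := u)]
      omega
    calc 2 ^ s ≤ m * 2 ^ (2*t) := hm2
    _ = m * (2 ^ t * 2 ^ t) := by rw [two_mul, pow_add]
    _ ≤ m * (2 ^ t * (2 ^ t + 1)) := by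
        exact Nat.mul_le_mul_left _ (Nat.mul_le_mul_left _ (by omega))
    _ = m * r * (r + 1) := by rw [hr]; ring
  -- key2 : (s+2)*(r+2) ≤ m*r
  have hkey2 : (s + 2) * (r + 2) ≤ m * r := by
    rcases Nat.eq_or_lt_of_le ht with h1 | h1
    · -- t = 1, r = 2
      have ht1 : t = 1 := h1.symm
      have hr2 : r = 2 := by rw [hr, ht1, pow_one]
      have hu' : u = s - 2 := by omega
      have hp := pow_lin1 s hs6
      have hm' : 2 * s + 5 ≤ m := by
        rw [hu'] at hmlb; omega
      rw [hr2]
      omega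
    · -- t ≥ 2
      have ht2 : 2 ≤ t := h1
      have hu4 : 4 ≤ u := by omega
      have hp := pow_lin2 u hu4
      have hs2u : s ≤ 2 * u := by omega
      have h3s : 3 * (s + 2) ≤ 2 ^ (u + 1) := by omega
      -- (s+2)*(r+2) ≤ (s+2)*3*2^(t-1) ≤ 2^(u+1)*2^(t-1) = 2^u * 2^t ≤ m * r
      have hrt : r + 2 ≤ 3 * 2 ^ (t - 1) := by
        have : (2:ℕ) ^ t = 2 * 2 ^ (t - 1) := by
          rw [← pow_succ']
          congr 1
          omega
        rw [hr]
        have h1t : 2 ≤ 2 ^ (t-1) := Nat.one_lt_two_pow_iff.mpr (by omega)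
        omega
      calc (s + 2) * (r + 2) ≤ (s + 2) * (3 * 2 ^ (t - 1)) := Nat.mul_le_mul_left _ hrt
      _ = (3 * (s + 2)) * 2 ^ (t - 1) := by ring
      _ ≤ 2 ^ (u + 1) * 2 ^ (t - 1) := Nat.mul_le_mul_right _ h3s
      _ = 2 ^ u * 2 ^ t := by
          rw [← pow_add, ← pow_add]
          congr 1
          omega
      _ ≤ m * r := by
          rw [hr]
          exact Nat.mul_le_mul_right _ (by omega)
  have hr2 : 2 ≤ r := by rw [hr]; exact h2t
  have hms2 : s + 2 ≤ m := by
    have : (s + 2) * r ≤ m * r := by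
      calc (s + 2) * r ≤ (s + 2) * (r + 2) := Nat.mul_le_mul_left _ (by omega)
      _ ≤ m * r := hkey2
    exact Nat.le_of_mul_le_mul_right this (by omega)
  have hm8 : 8 ≤ m := by omega
  -- final goal reduction: suffices k + s ≤ m * r
  suffices hks : k + s ≤ m * r by
    have hdiveq : r * n / (r + 1) = m * r := by
      rw [hnm]
      rw [show r * (m * (r+1)) = (m * r) * (r + 1) by ring]
      exact Nat.mul_div_cancel _ (by omega)
    rw [hdiveq]
    have := hks
    omega
  -- greedy covering family
  classical
  obtain ⟨ℓ, v, p, hvH, hcovv, hpS, hppos, htri⟩ :=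
    greedy {h : Fin n → ZMod 2 | (∀ c ∈ C, ∑ i', h i' * c i' = 0) ∧ hammingNorm h ≤ r + 1}
      (fun i => by obtain ⟨h, h1, h2, h3⟩ := hloc i; exact ⟨h, ⟨h1, h3⟩, h2⟩) Finset.univ
  have hvdual : ∀ j, ∀ c ∈ C, ∑ i', v j i' * c i' = 0 := fun j => (hvH j).1
  have hvwt : ∀ j, hammingNorm (v j) ≤ r + 1 := fun j => (hvH j).2
  have hcov' : ∀ i, ∃ j, v j i ≠ 0 := fun i => hcovv i (mem_univ i)
  have hone : ∀ a : ZMod 2, a ≠ 0 → a = 1 := by decide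
  -- the check matrix and its linear map
  set M : Matrix (Fin ℓ) (Fin n) (ZMod 2) := Matrix.of (fun j i => v j i) with hM
  set Φ : (Fin n → ZMod 2) →ₗ[ZMod 2] (Fin ℓ → ZMod 2) := M.mulVecLin with hΦ
  have hΦapp : ∀ x j, Φ x j = ∑ i, v j i * x i := by
    intro x j
    simp [hΦ, hM, Matrix.mulVecLin_apply, Matrix.mulVec, dotProduct]
  -- surjectivity of Φ via the triangular submatrix
  set T : Matrix (Fin ℓ) (Fin ℓ) (ZMod 2) := Matrix.of (fun j j' => v j (p j')) with hT
  have hTtri : T.BlockTriangular OrderDual.toDual := by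
    intro j j' hjj'
    exact htri j j' hjj'
  have hdetT : T.det = 1 := by
    rw [Matrix.det_of_lowerTriangular T hTtri]
    have hTjj : ∀ j, T j j = 1 := fun j => hone _ (hppos j)
    simp [hTjj]
  have hTunit : IsUnit T.det := by rw [hdetT]; exact isUnit_one
  have hsurj : Function.Surjective Φ := by
    intro z
    set y := T⁻¹.mulVec z with hy
    refine ⟨fun i => ∑ j', if i = p j' then y j' else 0, ?_⟩
    funext j
    rw [hΦapp]
    have hswap : ∀ i, v j i * (∑ j', if i = p j' then y j' else 0)
        = ∑ j', if i = p j' then v j (p j') * y j' else 0 := by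
      intro i
      rw [Finset.mul_sum]
      refine Finset.sum_congr rfl (fun j' _ => ?_)
      split
      · rename_i hh; rw [hh]
      · rw [mul_zero]
    calc (∑ i, v j i * (fun i => ∑ j', if i = p j' then y j' else 0) i)
        = ∑ i, ∑ j', if i = p j' then v j (p j') * y j' else 0 := by
          refine Finset.sum_congr rfl (fun i _ => hswap i)
    _ = ∑ j', ∑ i, if i = p j' then v j (p j') * y j' else 0 := Finset.sum_comm
    _ = ∑ j', v j (p j') * y j' := by
          refine Finset.sum_congr rfl (fun j' _ => ?_)
          simp
    _ = T.mulVec y j := by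
          simp [hT, Matrix.mulVec, dotProduct]
    _ = z j := by
          rw [hy, Matrix.mulVec_mulVec, Matrix.mul_nonsing_inv _ hTunit, Matrix.one_mulVec]
  have hrange : LinearMap.range Φ = ⊤ := LinearMap.range_eq_top.mpr hsurj
  have hrk := LinearMap.finrank_range_add_finrank_ker Φ
  rw [hrange, finrank_top] at hrk
  have hfr1 : Module.finrank (ZMod 2) (Fin ℓ → ZMod 2) = ℓ := by
    simp [Module.finrank_fintype_fun_eq_card]
  have hfr2 : Module.finrank (ZMod 2) (Fin n → ZMod 2) = n := by
    simp [Module.finrank_fintype_fun_eq_card]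
  rw [hfr1, hfr2] at hrk
  have hkerrank : Module.finrank (ZMod 2) (LinearMap.ker Φ) = n - ℓ := by omega
  have hℓn : ℓ ≤ n := by omega
  have hcardker : Nat.card (LinearMap.ker Φ) = 2 ^ (n - ℓ) := by
    rw [Nat.card_eq_fintype_card, Module.card_eq_pow_finrank (K := ZMod 2), ZMod.card, hkerrank]
  have hcardC : Nat.card C = 2 ^ k := by
    rw [Nat.card_eq_fintype_card, Module.card_eq_pow_finrank (K := ZMod 2), ZMod.card, hk]
  have hCker : C ≤ LinearMap.ker Φ := by
    intro c hc
    rw [LinearMap.mem_ker]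
    funext j
    rw [show (0 : Fin ℓ → ZMod 2) j = 0 from rfl, hΦapp]
    exact hvdual j c hc
  -- Weight bound: ℓ * (r+1) ≥ n via covering
  have hd1 : ∀ i, 1 ≤ (univ.filter (fun j => v j i ≠ 0)).card := by
    intro i
    obtain ⟨j, hj⟩ := hcov' i
    exact Finset.card_pos.mpr ⟨j, Finset.mem_filter.mpr ⟨mem_univ j, hj⟩⟩
  have hww : ∀ j, (univ.filter (fun i => v j i ≠ 0)).card ≤ r + 1 := by
    intro j
    have := hvwt j
    rw [hammingNorm] at this
    convert this using 2
  have hdc : ∑ i, (univ.filter (fun j => v j i ≠ 0)).card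
      = ∑ j, (univ.filter (fun i => v j i ≠ 0)).card := by
    simp only [Finset.card_filter]
    exact Finset.sum_comm
  have hsum_le : ∑ i, (univ.filter (fun j => v j i ≠ 0)).card ≤ ℓ * (r + 1) := by
    rw [hdc]
    calc ∑ j, (univ.filter (fun i => v j i ≠ 0)).card ≤ ∑ _j : Fin ℓ, (r+1) :=
      Finset.sum_le_sum (fun j _ => hww j)
    _ = ℓ * (r+1) := by simp [Finset.sum_const, Finset.card_univ, mul_comm]
  have hln : n ≤ ℓ * (r + 1) := by
    calc n = ∑ _i : Fin n, 1 := by simp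
    _ ≤ ∑ i, (univ.filter (fun j => v j i ≠ 0)).card := Finset.sum_le_sum (fun i _ => hd1 i)
    _ ≤ ℓ * (r + 1) := hsum_le
  have hmℓ : m ≤ ℓ := by
    refine Nat.le_of_mul_le_mul_right ?_ (show 0 < r + 1 by omega)
    rw [← hnm]
    exact hln
  -- case split on ℓ
  rcases Nat.lt_or_ge ℓ (m + s) with hcase | hcase
  swap
  · -- easy case : ℓ ≥ m + s
    have hle := Nat.card_le_card_of_injective _ (Submodule.inclusion_injective hCker)
    rw [hcardC, hcardker] at hle
    have hkle : k ≤ n - ℓ := (Nat.pow_le_pow_iff_right (by norm_num)).mp hle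
    have hn' : n = m * r + m := by rw [hnm]; ring
    omega
  -- main case
  set e := ℓ - m with hedef
  have heℓ : ℓ = m + e := by omega
  have he : e ≤ s - 1 := by omega
  -- the singleton-pattern sets
  set F : Fin ℓ → Finset (Fin n) :=
    fun j => univ.filter (fun i => v j i ≠ 0 ∧ ∀ j', j' ≠ j → v j' i = 0) with hFdef
  have hFdisj : ∀ j ∈ (univ : Finset (Fin ℓ)), ∀ j' ∈ (univ : Finset (Fin ℓ)),
      j ≠ j' → Disjoint (F j) (F j') := by
    intro j _ j' _ hjj'
    rw [Finset.disjoint_left]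
    intro i hi hi'
    have h1 := (Finset.mem_filter.mp hi).2
    have h2 := (Finset.mem_filter.mp hi').2
    exact h1.1 (h2.2 j hjj')
  set B : Finset (Finset (Fin n)) := univ.biUnion (fun j => (F j).powersetCard 2) with hBdef
  have hBdisj : ∀ j ∈ (univ : Finset (Fin ℓ)), ∀ j' ∈ (univ : Finset (Fin ℓ)),
      j ≠ j' → Disjoint ((F j).powersetCard 2) ((F j').powersetCard 2) := by
    intro j hj j' hj' hjj'
    rw [Finset.disjoint_left]
    intro a ha ha'
    obtain ⟨hsub, hcard⟩ := Finset.mem_powersetCard.mp ha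
    obtain ⟨hsub', _⟩ := Finset.mem_powersetCard.mp ha'
    obtain ⟨i, hi⟩ := Finset.card_pos.mp (show 0 < a.card by omega)
    exact (Finset.disjoint_left.mp (hFdisj j hj j' hj' hjj')) (hsub hi) (hsub' hi)
  have hBcard : B.card = ∑ j, ((F j).card).choose 2 := by
    rw [hBdef, Finset.card_biUnion hBdisj]
    refine Finset.sum_congr rfl (fun j _ => Finset.card_powersetCard 2 (F j))
  set N := ∑ j, (F j).card with hNdef
  have h2B : 2 * B.card + N = ∑ j, (F j).card ^ 2 := by
    rw [hBcard, hNdef, Finset.mul_sum, ← Finset.sum_add_distrib]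
    exact Finset.sum_congr rfl (fun j _ => two_choose_two _)
  -- N ≥ 2n - ℓ(r+1)
  have hmemF : ∀ (j : Fin ℓ) (i : Fin n), i ∈ F j ↔
      (v j i ≠ 0 ∧ ∀ j', j' ≠ j → v j' i = 0) := by
    intro j i
    rw [hFdef]
    simp
  have hbiU : univ.biUnion F = univ.filter
      (fun i => (univ.filter (fun j => v j i ≠ 0)).card = 1) := by
    ext i
    rw [Finset.mem_biUnion, Finset.mem_filter]
    constructor
    · rintro ⟨j, -, hji⟩
      rw [hmemF] at hji
      refine ⟨Finset.mem_univ i, ?_⟩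
      rw [Finset.card_eq_one]
      refine ⟨j, ?_⟩
      ext j'
      rw [Finset.mem_filter, Finset.mem_singleton]
      constructor
      · rintro ⟨-, hj'⟩
        by_contra hne'
        exact hj' (hji.2 j' hne')
      · intro hj'
        rw [hj']
        exact ⟨Finset.mem_univ j, hji.1⟩
    · rintro ⟨-, hcard1⟩
      obtain ⟨j, hj⟩ := Finset.card_eq_one.mp hcard1
      refine ⟨j, Finset.mem_univ j, ?_⟩
      rw [hmemF]
      constructor
      · have : j ∈ univ.filter (fun j => v j i ≠ 0) := by
          rw [hj]; exact Finset.mem_singleton_self j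
        exact (Finset.mem_filter.mp this).2
      · intro j' hj'
        by_contra hne'
        have : j' ∈ univ.filter (fun j => v j i ≠ 0) :=
          Finset.mem_filter.mpr ⟨Finset.mem_univ j', hne'⟩
        rw [hj, Finset.mem_singleton] at this
        exact hj' this
  have hNeq : N = (univ.filter
      (fun i => (univ.filter (fun j => v j i ≠ 0)).card = 1)).card := by
    rw [hNdef, ← hbiU, Finset.card_biUnion hFdisj]
  have hNlb : 2 * n ≤ N + ℓ * (r + 1) := by
    have hpt : ∀ i : Fin n, 2 ≤ (if (univ.filter (fun j => v j i ≠ 0)).card = 1 then 1 else 0)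
        + (univ.filter (fun j => v j i ≠ 0)).card := by
      intro i
      have := hd1 i
      split <;> omega
    have hsum2 : ∑ _i : Fin n, 2 ≤ ∑ i : Fin n,
        ((if (univ.filter (fun j => v j i ≠ 0)).card = 1 then 1 else 0)
        + (univ.filter (fun j => v j i ≠ 0)).card) := Finset.sum_le_sum (fun i _ => hpt i)
    rw [Finset.sum_add_distrib] at hsum2
    have hc1 : ∑ i : Fin n, (if (univ.filter (fun j => v j i ≠ 0)).card = 1 then 1 else 0)
        = (univ.filter (fun i => (univ.filter (fun j => v j i ≠ 0)).card = 1)).card :=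
      (Finset.card_filter _ _).symm
    rw [hc1] at hsum2
    have : ∑ _i : Fin n, 2 = 2 * n := by simp [Finset.sum_const, Finset.card_univ, mul_comm]
    omega
  -- Cauchy–Schwarz
  have hCS : N ^ 2 ≤ ℓ * ∑ j, (F j).card ^ 2 := by
    have hcs := sq_sum_le_card_mul_sum_sq
      (s := (univ : Finset (Fin ℓ))) (f := fun j => ((F j).card : ℤ))
    rw [Finset.card_univ, Fintype.card_fin] at hcs
    have hz : ((N : ℤ)) ^ 2 ≤ (ℓ : ℤ) * ∑ j, ((F j).card : ℤ) ^ 2 := by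
      rw [hNdef]
      push_cast
      exact_mod_cast hcs
    exact_mod_cast hz
  -- master inequality application
  have hMIe := MI m r s hm8 hms2 hkey2 e he
  have hx1 : m * (r + 1) = m * r + m := by ring
  have hx2 : e * (r + 1) = e * r + e := by ring
  have hx3 : e * (r + 2) = e * r + 2 * e := by ring
  have hx4 : (m - e) * (r + 1) = m * (r + 1) - e * (r + 1) := Nat.sub_mul m e (r + 1)
  have her : e * r ≤ m * r := Nat.mul_le_mul_right r (by omega)
  have herr : e * (r + 2) + 3 * (r + 2) ≤ m * r := by
    calc e * (r + 2) + 3 * (r + 2) = (e + 3) * (r + 2) := by ring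
    _ ≤ (s + 2) * (r + 2) := Nat.mul_le_mul_right _ (by omega)
    _ ≤ m * r := hkey2
  have hx5 : ℓ * (r + 1) = m * (r + 1) + e * (r + 1) := by rw [heℓ]; ring
  set N₀ := (m - e) * (r + 1) with hN₀def
  have hN₀eq : N₀ = ℓ + (m * r - e * (r + 2)) := by omega
  have hNge : N₀ ≤ N := by omega
  have hchain1 : ℓ * 2 ^ s ≤ 2 ^ e * (N₀ * (N₀ - ℓ)) := by
    have hsub : N₀ - ℓ = m * r - e * (r + 2) := by omega
    calc ℓ * 2 ^ s = (m + e) * 2 ^ s := by rw [heℓ]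
    _ ≤ (m + e) * (m * r * (r + 1)) := Nat.mul_le_mul_left _ hkey1
    _ = ((m + e) * (m * r)) * (r + 1) := by ring
    _ ≤ (2 ^ e * ((m - e) * (m * r - e * (r + 2)))) * (r + 1) := Nat.mul_le_mul_right _ hMIe
    _ = 2 ^ e * (((m - e) * (r + 1)) * (m * r - e * (r + 2))) := by ring
    _ = 2 ^ e * (N₀ * (N₀ - ℓ)) := by rw [← hN₀def, hsub]
  have hchain2 : N₀ * (N₀ - ℓ) ≤ N * (N - ℓ) :=
    Nat.mul_le_mul hNge (by omega)
  have hchain3 : N * (N - ℓ) ≤ 2 * (B.card * ℓ) := by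
    refine chain3_help N ℓ B.card ?_
    rw [h2B]
    exact hCS
  have hℓpos : 0 < ℓ := by omega
  have hchain4 : 2 ^ s * ℓ ≤ (2 ^ (e + 1) * B.card) * ℓ := by
    calc 2 ^ s * ℓ = ℓ * 2 ^ s := mul_comm _ _
    _ ≤ 2 ^ e * (N₀ * (N₀ - ℓ)) := hchain1
    _ ≤ 2 ^ e * (N * (N - ℓ)) := Nat.mul_le_mul_left _ hchain2
    _ ≤ 2 ^ e * (2 * (B.card * ℓ)) := Nat.mul_le_mul_left _ hchain3
    _ = (2 ^ (e + 1) * B.card) * ℓ := by rw [pow_succ]; ring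
  have hse : e + 1 ≤ s := by omega
  have hBlb : 2 ^ (s - e - 1) ≤ B.card := by
    have hcancel : 2 ^ s ≤ 2 ^ (e + 1) * B.card :=
      Nat.le_of_mul_le_mul_right hchain4 hℓpos
    have hps : 2 ^ s = 2 ^ (e + 1) * 2 ^ (s - e - 1) := by
      rw [← pow_add]
      congr 1
      omega
    rw [hps] at hcancel
    exact Nat.le_of_mul_le_mul_left hcancel (pow_pos (by norm_num) _)
  -- the injection of pairs and codewords into the kernel
  set g : Finset (Fin n) → (Fin n → ZMod 2) := fun a i => if i ∈ a then 1 else 0 with hgdef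
  have hgmem : ∀ (b : Finset (Fin n)) (i : Fin n), g b i ≠ 0 ↔ i ∈ b := by
    intro b i
    rw [hgdef]
    simp only
    split
    · simpa
    · simpa
  have hgempty : g ∅ = 0 := by funext i; rw [hgdef]; simp
  have hgPhi : ∀ a ∈ insert ∅ B, Φ (g a) = 0 := by
    intro a ha
    rcases Finset.mem_insert.mp ha with rfl | haB
    · rw [hgempty, map_zero]
    · obtain ⟨j, -, haj⟩ := Finset.mem_biUnion.mp haB
      obtain ⟨hsub, hcard⟩ := Finset.mem_powersetCard.mp haj
      funext j''
      rw [show (0 : Fin ℓ → ZMod 2) j'' = 0 from rfl, hΦapp]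
      have hred : ∀ i : Fin n, v j'' i * g a i = if i ∈ a then v j'' i else 0 := by
        intro i
        rw [hgdef]
        simp only
        split <;> simp
      rw [Finset.sum_congr rfl (fun i _ => hred i), Finset.sum_ite_mem, Finset.univ_inter]
      by_cases hjj : j'' = j
      · subst hjj
        have hval : ∀ i ∈ a, v j'' i = 1 := by
          intro i hia
          exact hone _ ((hmemF j'' i).mp (hsub hia)).1
        rw [Finset.sum_congr rfl hval, Finset.sum_const, hcard]
        rw [nsmul_eq_mul]
        decide
      · have hval : ∀ i ∈ a, v j'' i = 0 := fun i hia =>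
          ((hmemF j i).mp (hsub hia)).2 j'' hjj
        rw [Finset.sum_congr rfl hval]
        exact Finset.sum_const_zero
  have hcard2 : ∀ a ∈ insert ∅ B, a.card ≤ 2 := by
    intro a ha
    rcases Finset.mem_insert.mp ha with rfl | haB
    · simp
    · obtain ⟨j, -, haj⟩ := Finset.mem_biUnion.mp haB
      exact le_of_eq (Finset.mem_powersetCard.mp haj).2
  have hmemker : ∀ (a : Finset (Fin n)), a ∈ insert ∅ B → ∀ (c : Fin n → ZMod 2), c ∈ C →
      g a + c ∈ LinearMap.ker Φ := by
    intro a ha c hc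
    rw [LinearMap.mem_ker, map_add, hgPhi a ha, zero_add]
    exact LinearMap.mem_ker.mp (hCker hc)
  have hwt4 : ∀ a ∈ insert ∅ B, ∀ a' ∈ insert ∅ B, hammingNorm (g a - g a') ≤ 4 := by
    intro a ha a' ha'
    have hsupp : univ.filter (fun i => (g a - g a') i ≠ 0) ⊆ a ∪ a' := by
      intro i hi
      rw [Finset.mem_filter] at hi
      by_contra hiu
      rw [Finset.mem_union] at hiu
      push_neg at hiu
      apply hi.2
      show g a i - g a' i = 0
      have h1 : g a i = 0 := by
        by_contra hne'
        exact hiu.1 ((hgmem a i).mp hne')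
      have h2 : g a' i = 0 := by
        by_contra hne'
        exact hiu.2 ((hgmem a' i).mp hne')
      rw [h1, h2, sub_zero]
    calc hammingNorm (g a - g a') = (univ.filter (fun i => (g a - g a') i ≠ 0)).card := by
          rw [hammingNorm]
    _ ≤ (a ∪ a').card := Finset.card_le_card hsupp
    _ ≤ a.card + a'.card := Finset.card_union_le a a'
    _ ≤ 4 := by
          have := hcard2 a ha
          have := hcard2 a' ha'
          omega
  set EB := insert ∅ B with hEBdef
  have hEBcard : EB.card = B.card + 1 := by
    rw [hEBdef, Finset.card_insert_of_notMem]
    · intro hmem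
      obtain ⟨j, -, haj⟩ := Finset.mem_biUnion.mp hmem
      have := (Finset.mem_powersetCard.mp haj).2
      simp at this
  have hfinj : Function.Injective
      (fun x : {a // a ∈ EB} × {c // c ∈ C} =>
        (⟨g x.1.1 + x.2.1, hmemker x.1.1 x.1.2 x.2.1 x.2.2⟩ : LinearMap.ker Φ)) := by
    rintro ⟨⟨a, haEB⟩, ⟨c, hc⟩⟩ ⟨⟨a', haEB'⟩, ⟨c', hc'⟩⟩ hxy
    simp only [Subtype.mk.injEq] at hxy
    have hsubeq : g a - g a' = c' - c := by
      rw [sub_eq_sub_iff_add_eq_add]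
      rw [hxy]
      ring
    have hwC : g a - g a' ∈ C := hsubeq ▸ sub_mem hc' hc
    have hwzero : g a - g a' = 0 := by
      by_contra hne'
      have := hdist _ hwC hne'
      have := hwt4 a haEB a' haEB'
      omega
    have hgaeq : g a = g a' := sub_eq_zero.mp hwzero
    have haeq : a = a' := by
      ext i
      rw [← hgmem a i, ← hgmem a' i, hgaeq]
    subst haeq
    have hceq : c = c' := by
      have := hxy
      exact add_left_cancel this
    subst hceq
    rfl
  have hcount := Nat.card_le_card_of_injective _ hfinj
  rw [Nat.card_prod] at hcount
  have hc1 : Nat.card {a // a ∈ EB} = B.card + 1 := by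
    rw [Nat.card_eq_fintype_card, Fintype.card_coe, hEBcard]
  have hc2 : Nat.card {c // c ∈ C} = 2 ^ k := hcardC
  rw [hc1, hc2, hcardker] at hcount
  -- final extraction
  have hfinal : 2 ^ (s - e - 1 + k) < 2 ^ (n - ℓ) := by
    calc 2 ^ (s - e - 1 + k) = 2 ^ (s - e - 1) * 2 ^ k := pow_add 2 _ _
    _ < (2 ^ (s - e - 1) + 1) * 2 ^ k := by
        have hpk : 0 < 2 ^ k := pow_pos (by norm_num : (0:ℕ) < 2) k
        have hexp : (2 ^ (s - e - 1) + 1) * 2 ^ k = 2 ^ (s - e - 1) * 2 ^ k + 2 ^ k := by ring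
        omega
    _ ≤ (B.card + 1) * 2 ^ k := Nat.mul_le_mul_right _ (by omega)
    _ ≤ 2 ^ (n - ℓ) := hcount
  have hlast := (Nat.pow_lt_pow_iff_right (by norm_num : 1 < 2)).mp hfinal
  have hn' : n = m * r + m := by rw [hnm]; ring
  omega
end

section
/- Let t ≥ 1 be an integer and let β be an element of order 2^t + 1 in the field 𝔽_{2^{2t}}. Define C = { c = (c₀, c₁, …, c_{2^t}) ∈ 𝔽₂^{2^t+1} : Σ_{i=0}^{2^t} cᵢ = 0 in 𝔽₂ and Σ_{i=0}^{2^t} cᵢ β^i = 0 in 𝔽_{2^{2t}} }. Then C is a linear subspace of 𝔽₂^{2^t+1} of dimension at least 2^t − 2t, and every nonzero vector of C has Hamming weight at least 6. -/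
private lemma aux_two {F : Type*} [Field F] [CharP F 2] {x y : F}
    (h : x + y = 0) : x = y := by
  rw [add_eq_zero_iff_eq_neg.mp h, CharTwo.neg_eq]

private lemma aux_four {F : Type*} [Field F] [CharP F 2] {x y z w : F}
    (hxy : x ≠ y) (hxz : x ≠ z) (hyz : y ≠ z) (hzw : z ≠ w)
    (h1 : x + y + z + w = 0)
    (h3 : y*z*w + x*z*w + x*y*w + x*y*z = 0) : False := by
  have hw : w = x + y + z := by
    have h1' : (x + y + z) + w = 0 := by linear_combination h1
    have := aux_two h1'
    exact this.symm
  have h2 : (2 : F) = 0 := CharTwo.two_eq_zero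
  have key : (x+y)*(y+z)*(x+z) = 0 := by
    calc (x+y)*(y+z)*(x+z)
        = (y*z*w + x*z*w + x*y*w + x*y*z) - 2*(x*y*z) := by rw [hw]; ring
      _ = 0 - 2*(x*y*z) := by rw [h3]
      _ = 0 := by rw [h2]; ring
  rcases mul_eq_zero.mp key with h | h
  · rcases mul_eq_zero.mp h with h | h
    · exact hxy (aux_two h)
    · exact hyz (aux_two h)
  · exact hxz (aux_two h)

set_option maxHeartbeats 1000000 in
set_option synthInstance.maxHeartbeats 400000 in
/-- Appendix claim of the paper: for `β` of order `2^t + 1` in `𝔽_{2^{2t}}`, the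
binary code `C = {c ∈ 𝔽₂^{2^t+1} : Σ cᵢ = 0 and Σ cᵢ βⁱ = 0}` is a linear subspace
of dimension at least `2^t − 2t` whose nonzero vectors all have Hamming weight at
least `6`. -/
theorem stmt_17 (t : ℕ) (ht : 1 ≤ t) (β : GaloisField 2 (2 * t))
    (hβ : orderOf β = 2 ^ t + 1) :
    ∃ W : Submodule (ZMod 2) (Fin (2 ^ t + 1) → ZMod 2),
      (W : Set (Fin (2 ^ t + 1) → ZMod 2)) =
        {c | ∑ i, c i = 0 ∧ ∑ i : Fin (2 ^ t + 1), c i • β ^ (i : ℕ) = 0} ∧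
      2 ^ t - 2 * t ≤ Module.finrank (ZMod 2) W ∧
      ∀ c ∈ W, c ≠ 0 → 6 ≤ hammingNorm c := by
  classical
  -- the linear map cutting out the code
  let L : (Fin (2 ^ t + 1) → ZMod 2) →ₗ[ZMod 2] ZMod 2 × GaloisField 2 (2 * t) :=
    { toFun := fun c => (∑ i, c i, ∑ i, c i • β ^ (i : ℕ))
      map_add' := by
        intro a b
        simp [Finset.sum_add_distrib, add_smul, Prod.ext_iff]
      map_smul' := by
        intro r a
        simp [Finset.mul_sum, mul_smul, Finset.smul_sum, Prod.ext_iff] }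
  refine ⟨LinearMap.ker L, ?_, ?_, ?_⟩
  · ext c
    simp [L, LinearMap.mem_ker, Prod.ext_iff]
  · -- dimension bound
    have hcodim : Module.finrank (ZMod 2) (ZMod 2 × GaloisField 2 (2 * t)) = 1 + 2 * t := by
      rw [Module.finrank_prod, Module.finrank_self, GaloisField.finrank 2 (by omega)]
    have hrk := LinearMap.finrank_range_add_finrank_ker L
    have hdom : Module.finrank (ZMod 2) (Fin (2 ^ t + 1) → ZMod 2) = 2 ^ t + 1 := by simp
    have hle : Module.finrank (ZMod 2) (LinearMap.range L) ≤ 1 + 2 * t := by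
      rw [← hcodim]; exact Submodule.finrank_le _
    rw [hdom] at hrk
    omega
  · -- minimum distance
    intro c hc hc0
    have hmem : (∑ i, c i = 0) ∧ (∑ i : Fin (2 ^ t + 1), c i • β ^ (i : ℕ) = 0) := by
      have := (LinearMap.mem_ker).mp hc
      simpa [L, Prod.ext_iff] using this
    obtain ⟨hs1, hs2⟩ := hmem
    set S : Finset (Fin (2 ^ t + 1)) := Finset.filter (fun i => c i ≠ 0) Finset.univ with hS
    have hnorm : hammingNorm c = S.card := rfl
    rw [hnorm]
    have hone : ∀ i ∈ S, c i = 1 := by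
      intro i hi
      have h2 : ∀ a : ZMod 2, a ≠ 0 → a = 1 := by decide
      exact h2 _ (Finset.mem_filter.mp hi).2
    -- even cardinality
    have heven : 2 ∣ S.card := by
      have h1 : ∑ i ∈ S, c i = 0 := by
        rw [hS, Finset.sum_filter_ne_zero]; exact hs1
      have h2 : ((S.card : ℕ) : ZMod 2) = 0 := by
        rw [← h1, Finset.sum_congr rfl hone]
        simp
      exact (ZMod.natCast_eq_zero_iff _ _).mp h2
    have hpos : S.card ≠ 0 := by
      intro h
      apply hc0
      funext i
      by_contra hne
      have : i ∈ S := Finset.mem_filter.mpr ⟨Finset.mem_univ _, hne⟩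
      simp [Finset.card_eq_zero.mp h] at this
    -- sum of powers over support vanishes
    have hsum : ∑ i ∈ S, β ^ (i : ℕ) = 0 := by
      have e1 : ∑ i : Fin (2 ^ t + 1), c i • β ^ (i : ℕ) = ∑ i ∈ S, c i • β ^ (i : ℕ) := by
        refine (Finset.sum_subset (Finset.filter_subset _ _) ?_).symm
        intro i _ hi
        have : c i = 0 := by
          by_contra hne
          exact hi (Finset.mem_filter.mpr ⟨Finset.mem_univ _, hne⟩)
        rw [this, zero_smul]
      have e2 : ∑ i ∈ S, c i • β ^ (i : ℕ) = ∑ i ∈ S, β ^ (i : ℕ) :=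
        Finset.sum_congr rfl fun i hi => by rw [hone i hi, one_smul]
      rw [← e2, ← e1, hs2]
    -- injectivity of powers of β on Fin (2 ^ t + 1)
    have binj : ∀ i j : Fin (2 ^ t + 1), β ^ (i : ℕ) = β ^ (j : ℕ) → i = j := by
      intro i j h
      exact Fin.ext (pow_injOn_Iio_orderOf (by rw [hβ]; exact i.isLt)
        (by rw [hβ]; exact j.isLt) h)
    have hpow1 : ∀ i : Fin (2 ^ t + 1), β ^ (i : ℕ) * (β ^ (i : ℕ)) ^ (2 ^ t) = 1 := by
      intro i
      have e : β ^ (i : ℕ) * (β ^ (i : ℕ)) ^ (2 ^ t) = (β ^ (i : ℕ)) ^ (2 ^ t + 1) := by ring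
      have hb : β ^ (2 ^ t + 1) = 1 := by rw [← hβ]; exact pow_orderOf_eq_one β
      rw [e, pow_right_comm, hb, one_pow]
    by_contra hlt
    push_neg at hlt
    interval_cases h : S.card
    · exact hpos rfl
    · omega
    · -- weight 2
      obtain ⟨a, b, hab, hSeq⟩ := Finset.card_eq_two.mp h
      rw [hSeq, Finset.sum_pair hab] at hsum
      exact hab (binj a b (aux_two hsum))
    · omega
    · -- weight 4
      obtain ⟨a, T, haT, hins, hT3⟩ := Finset.card_eq_succ.mp h
      obtain ⟨b, d, e, hbd, hbe, hde, hTeq⟩ := Finset.card_eq_three.mp hT3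
      subst hTeq
      have hab : a ≠ b := fun h => haT (h ▸ by simp)
      have had : a ≠ d := fun h => haT (h ▸ by simp)
      have hae : a ≠ e := fun h => haT (h ▸ by simp)
      set x := β ^ (a : ℕ) with hx
      set y := β ^ (b : ℕ) with hy
      set z := β ^ (d : ℕ) with hz
      set w := β ^ (e : ℕ) with hw
      have hsum4 : x + y + z + w = 0 := by
        rw [← hins] at hsum
        rw [Finset.sum_insert haT, Finset.sum_insert (by simp [hbd, hbe]),
          Finset.sum_pair hde] at hsum
        linear_combination hsum
      have hxy : x ≠ y := fun h => hab (binj a b h)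
      have hxz : x ≠ z := fun h => had (binj a d h)
      have hyz : y ≠ z := fun h => hbd (binj b d h)
      have hzw : z ≠ w := fun h => hde (binj d e h)
      -- Frobenius: sum of 2^t-th powers vanishes
      have hfrob : x ^ (2 ^ t) + y ^ (2 ^ t) + z ^ (2 ^ t) + w ^ (2 ^ t) = 0 := by
        have h0 : (x + y + z + w) ^ (2 ^ t) = 0 := by
          rw [hsum4, zero_pow (by positivity)]
        rwa [add_pow_char_pow, add_pow_char_pow, add_pow_char_pow] at h0
      -- turn it into the third elementary symmetric relation
      have h3 : y*z*w + x*z*w + x*y*w + x*y*z = 0 := by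
        have hx1 := hpow1 a
        have hy1 := hpow1 b
        have hz1 := hpow1 d
        have hw1 := hpow1 e
        rw [← hx] at hx1; rw [← hy] at hy1; rw [← hz] at hz1; rw [← hw] at hw1
        have expand : (x ^ (2^t) + y ^ (2^t) + z ^ (2^t) + w ^ (2^t)) * (x*y*z*w)
            = (x * x ^ (2^t)) * (y*z*w) + (y * y ^ (2^t)) * (x*z*w)
              + (z * z ^ (2^t)) * (x*y*w) + (w * w ^ (2^t)) * (x*y*z) := by ring
        rw [hx1, hy1, hz1, hw1, hfrob, zero_mul] at expand
        linear_combination -expand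
      exact aux_four hxy hxz hyz hzw hsum4 h3
    · omega
end
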